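/- arXiv:2109.04519 — 5 statements merged into one kernel-verified Lean document; each statement's English description precedes it below -/
import Mathlib

section
/- Let n and m be positive integers with n > α_t. Then 𝔡^m(I,n) ≤ 𝔡^{m+1}(I,n). -/
open Finset

/-- Sequences of length `ℓ` (positions `1..ℓ`) with entries in `{1,…,n}`,
encoded as functions `ℕ → ℕ` vanishing outside `[1, ℓ]`. -/
def Seqs (ℓ n : ℕ) : Set (ℕ → ℕ) :=
  {v | (∀ i ∈ Finset.Icc 1 ℓ, v i ∈ Finset.Icc 1 n) ∧ ∀ i, i ∉ Finset.Icc 1 ℓ → v i = 0}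

/-- Descent set of a sequence of length `ℓ`:
`Des(v) = {i ∈ {1,…,ℓ-1} : v_i > v_{i+1}}`. -/
def Des (ℓ : ℕ) (v : ℕ → ℕ) : Set ℕ :=
  {i | 1 ≤ i ∧ i < ℓ ∧ v (i + 1) < v i}

/-- Number of occurrences of the value `j` among positions `1..ℓ` of `v`. -/
def mult (ℓ : ℕ) (v : ℕ → ℕ) (j : ℕ) : ℕ :=
  ((Finset.Icc 1 ℓ).filter fun i => v i = j).card

/-- `𝔡^m(I, n)`: the number of sequences of length `n*m`, in which each of `1,…,n`
appears exactly `m` times, whose descent set is `I`. -/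
noncomputable def dP (m : ℕ) (I : Finset ℕ) (n : ℕ) : ℕ :=
  Set.ncard {w ∈ Seqs (n * m) n |
    Des (n * m) w = ↑I ∧ ∀ j ∈ Finset.Icc 1 n, mult (n * m) w j = m}

/-- `N(I, n)`: the number of sequences `v = (v_1, …, v_{α_t})` with entries in `{1,…,n}`
such that `Des v = I \ {α_t}` and `v_{α_t} ≠ 1`. -/
noncomputable def Ncount (I : Finset ℕ) (n : ℕ) : ℕ :=
  Set.ncard {v ∈ Seqs (I.sup id) n |
    Des (I.sup id) v = ↑(I.erase (I.sup id)) ∧ v (I.sup id) ≠ 1}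

/-- `D^m(I, n)`: the number of sequences `v = (v_1, …, v_{α_t})` with entries in `{1,…,n}`
such that `Des v = I \ {α_t}` and each of `1,…,n` appears at most `m` times in `v`. -/
noncomputable def Dcount (m : ℕ) (I : Finset ℕ) (n : ℕ) : ℕ :=
  Set.ncard {v ∈ Seqs (I.sup id) n |
    Des (I.sup id) v = ↑(I.erase (I.sup id)) ∧ ∀ j ∈ Finset.Icc 1 n, mult (I.sup id) v j ≤ m}

/-- `b_i(I)`: the number of sequences `v = (v_1, …, v_{α_t})` with entries in `{1,…,i+1}`
such that `Des v = I \ {α_t}`, every number in `{2,…,i+1}` occurs in `v`, and `v_{α_t} ≠ 1`. -/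
noncomputable def bcoef (I : Finset ℕ) (i : ℕ) : ℕ :=
  Set.ncard {v ∈ Seqs (I.sup id) (i + 1) |
    Des (I.sup id) v = ↑(I.erase (I.sup id)) ∧
    (∀ l ∈ Finset.Icc 2 (i + 1), ∃ j ∈ Finset.Icc 1 (I.sup id), v j = l) ∧
    v (I.sup id) ≠ 1}

/-- `L(I)`: the length of the longest run of consecutive integers contained in `I`. -/
def longestRun (I : Finset ℕ) : ℕ :=
  I.sup fun a => ((Finset.Icc a (I.sup id)).filter fun b => Finset.Icc a b ⊆ I).card

/-- `alphaVal I k` is the `k`-th smallest element of `I` (`1`-indexed), with `alphaVal I 0 = 0`. -/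
def alphaVal (I : Finset ℕ) (k : ℕ) : ℕ :=
  if k = 0 then 0 else (I.sort (· ≤ ·)).getD (k - 1) 0

/-- For a composition `A = (a_1,…,a_s)` of `t = |I|`, `sigmaC I A i` is
`σ_{i+1} = β_{a_1+⋯+a_i+1} + ⋯ + β_{a_1+⋯+a_{i+1}}`, where `β` is the sequence of first
differences of `(0, α_1, …, α_t)`; by telescoping this equals
`α_{a_1+⋯+a_{i+1}} - α_{a_1+⋯+a_i}`. -/
def sigmaC (I : Finset ℕ) {t : ℕ} (A : Composition t) (i : ℕ) : ℕ :=
  alphaVal I (A.sizeUpTo (i + 1)) - alphaVal I (A.sizeUpTo i)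

/-- `C(A, I)` for a composition `A = (a_1,…,a_r)`: the number of sequences
`v = (v_1, …, v_{α_t})` with entries in `{1,…,r}` such that `Des v = I \ {α_t}`
and the number `j` appears exactly `a_j` times in `v`, for each `j ∈ {1,…,r}`. -/
noncomputable def Ccount (I : Finset ℕ) {N : ℕ} (A : Composition N) : ℕ :=
  Set.ncard {v ∈ Seqs (I.sup id) A.length |
    Des (I.sup id) v = ↑(I.erase (I.sup id)) ∧
    ∀ j ∈ Finset.Icc 1 A.length, mult (I.sup id) v j = A.blocks.getD (j - 1) 0}

/-- The generalized binomial coefficient `C(a, i) = a(a-1)⋯(a-i+1)/i!` for an integer `a`. -/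
def genChoose (a : ℤ) (i : ℕ) : ℚ :=
  (∏ j ∈ Finset.range i, ((a : ℚ) - (j : ℚ))) / (Nat.factorial i)
namespace Stmt0Aux

/-- Cumulative remaining counts: `cumR a m' v j = ∑_{l=1}^{j} (m' - mult a v l)`. -/
def cumR (a m' : ℕ) (v : ℕ → ℕ) (j : ℕ) : ℕ :=
  ∑ l ∈ Finset.Icc 1 j, (m' - mult a v l)

/-- Canonical extension of a prefix `v` (on `[1,a]`) to a word of length `n*m'` whose
suffix is the weakly increasing arrangement of the remaining letters. -/
noncomputable def ext (n a m' : ℕ) (v : ℕ → ℕ) (i : ℕ) : ℕ :=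
  if i ≤ a then v i
  else if i ≤ n * m' then sInf {j | i - a ≤ cumR a m' v j}
  else 0

lemma mult_congr {a : ℕ} {v v' : ℕ → ℕ} (h : ∀ i ∈ Finset.Icc 1 a, v i = v' i) (j : ℕ) :
    mult a v j = mult a v' j := by
  unfold mult
  congr 1
  apply Finset.filter_congr
  intro i hi
  simp [h i hi]

lemma sum_mult {a n : ℕ} {v : ℕ → ℕ} (h1 : ∀ i ∈ Finset.Icc 1 a, v i ∈ Finset.Icc 1 n) :
    ∑ l ∈ Finset.Icc 1 n, mult a v l = a := by
  unfold mult
  rw [← Finset.card_eq_sum_card_fiberwise h1]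
  simp [Nat.card_Icc]

lemma cum_mono {a m' : ℕ} {v : ℕ → ℕ} {j j' : ℕ} (h : j ≤ j') :
    cumR a m' v j ≤ cumR a m' v j' :=
  Finset.sum_le_sum_of_subset (Finset.Icc_subset_Icc_right h)

lemma cum_zero (a m' : ℕ) (v : ℕ → ℕ) : cumR a m' v 0 = 0 := by
  simp [cumR]

lemma cum_top {a n m' : ℕ} {v : ℕ → ℕ}
    (h1 : ∀ i ∈ Finset.Icc 1 a, v i ∈ Finset.Icc 1 n)
    (h2 : ∀ j ∈ Finset.Icc 1 n, mult a v j ≤ m') :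
    cumR a m' v n + a = n * m' := by
  have key : cumR a m' v n + ∑ l ∈ Finset.Icc 1 n, mult a v l = ∑ l ∈ Finset.Icc 1 n, m' := by
    unfold cumR
    rw [← Finset.sum_add_distrib]
    apply Finset.sum_congr rfl
    intro l hl
    exact Nat.sub_add_cancel (h2 l hl)
  rw [sum_mult h1] at key
  simpa [Nat.card_Icc, mul_comm] using key

lemma cum_succ {a m' : ℕ} {v : ℕ → ℕ} {j : ℕ} (hj : 1 ≤ j) :
    cumR a m' v j = cumR a m' v (j - 1) + (m' - mult a v j) := by
  have hj' : j = (j - 1) + 1 := by omega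
  conv_lhs => rw [hj']
  unfold cumR
  rw [Finset.sum_Icc_succ_top (by omega : 1 ≤ j - 1 + 1), ← hj']

section EXT

variable {n a m' : ℕ} {v : ℕ → ℕ}

lemma Eset_ne (h1 : ∀ i ∈ Finset.Icc 1 a, v i ∈ Finset.Icc 1 n)
    (h2 : ∀ j ∈ Finset.Icc 1 n, mult a v j ≤ m') {i : ℕ} (hi : i ≤ n * m') :
    n ∈ {j | i - a ≤ cumR a m' v j} := by
  have := cum_top h1 h2
  simp only [Set.mem_setOf_eq]
  omega

lemma e_char (h1 : ∀ i ∈ Finset.Icc 1 a, v i ∈ Finset.Icc 1 n)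
    (h2 : ∀ j ∈ Finset.Icc 1 n, mult a v j ≤ m') {i j : ℕ} (hi : i ≤ n * m') :
    sInf {j | i - a ≤ cumR a m' v j} ≤ j ↔ i - a ≤ cumR a m' v j := by
  constructor
  · intro h
    have hne : {j | i - a ≤ cumR a m' v j}.Nonempty := ⟨n, Eset_ne h1 h2 hi⟩
    have hm := Nat.sInf_mem hne
    exact le_trans hm (cum_mono h)
  · intro h
    exact Nat.sInf_le h

lemma e_pos {i : ℕ} (hi : a < i)
    (hne : {j | i - a ≤ cumR a m' v j}.Nonempty) :
    1 ≤ sInf {j | i - a ≤ cumR a m' v j} := by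
  by_contra h
  have h0 : sInf {j | i - a ≤ cumR a m' v j} = 0 := by omega
  have := Nat.sInf_mem hne
  rw [h0] at this
  simp only [Set.mem_setOf_eq, cum_zero] at this
  omega

lemma ext_of_le {i : ℕ} (h : i ≤ a) : ext n a m' v i = v i := if_pos h

lemma ext_suffix {i : ℕ} (h : a < i) (h2 : i ≤ n * m') :
    ext n a m' v i = sInf {j | i - a ≤ cumR a m' v j} := by
  rw [ext, if_neg (by omega), if_pos h2]

lemma ext_big {i : ℕ} (h : a < i) (h2 : ¬ i ≤ n * m') : ext n a m' v i = 0 := by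
  rw [ext, if_neg (by omega), if_neg h2]

lemma filter_Icc_split (a L : ℕ) (haL : a ≤ L) (p : ℕ → Prop) [DecidablePred p] :
    ((Finset.Icc 1 L).filter p).card
      = ((Finset.Icc 1 a).filter p).card + ((Finset.Icc (a+1) L).filter p).card := by
  have hu : Finset.Icc 1 L = Finset.Icc 1 a ∪ Finset.Icc (a+1) L := by
    ext x; simp only [Finset.mem_Icc, Finset.mem_union]; omega
  rw [hu, Finset.filter_union, Finset.card_union_of_disjoint]
  exact Finset.disjoint_filter_filter (by
    simp only [Finset.disjoint_left, Finset.mem_Icc]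
    intro x hx hx'
    omega)

/-- The extension lies in the `dP (m')` defining set (over letters `1..n`). -/
lemma ext_mem (I : Finset ℕ)
    (han : a < n) (hm' : 1 ≤ m')
    (hv0 : v 0 = 0)
    (h1 : ∀ i ∈ Finset.Icc 1 a, v i ∈ Finset.Icc 1 n)
    (h2 : ∀ j ∈ Finset.Icc 1 n, mult a v j ≤ m')
    (hd : Des a v = ↑(I.erase a))
    (hva : 2 ≤ v a)
    (hlow : mult a v 1 < m')
    (haI : a ∈ I) (hIle : ∀ x ∈ I, x ≤ a) (hI1 : ∀ x ∈ I, 1 ≤ x) :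
    ext n a m' v ∈ Seqs (n * m') n ∧ Des (n * m') (ext n a m' v) = ↑I ∧
      ∀ j ∈ Finset.Icc 1 n, mult (n * m') (ext n a m' v) j = m' := by
  have haL : a < n * m' := lt_of_lt_of_le han (by nlinarith)
  have ha1 : 1 ≤ a := hI1 a haI
  -- suffix values
  have hvalS : ∀ i, a < i → i ≤ n * m' → ext n a m' v i ∈ Finset.Icc 1 n := by
    intro i hai hiL
    rw [ext_suffix hai hiL]
    have hne : {j | i - a ≤ cumR a m' v j}.Nonempty := ⟨n, Eset_ne h1 h2 hiL⟩
    refine Finset.mem_Icc.mpr ⟨e_pos hai hne, ?_⟩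
    exact (e_char h1 h2 hiL).mpr (by have := cum_top h1 h2; omega)
  refine ⟨⟨?_, ?_⟩, ?_, ?_⟩
  · -- values in range
    intro i hi
    rw [Finset.mem_Icc] at hi
    by_cases h : i ≤ a
    · rw [ext_of_le h]; exact h1 i (Finset.mem_Icc.mpr ⟨hi.1, h⟩)
    · exact hvalS i (by omega) hi.2
  · -- support
    intro i hi
    rw [Finset.mem_Icc] at hi
    push_neg at hi
    by_cases h0 : i = 0
    · subst h0; rw [ext_of_le (by omega)]; exact hv0
    · exact ext_big (by omega) (by omega)
  · -- descent set
    apply Set.ext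
    intro i
    simp only [Des, Set.mem_setOf_eq, Finset.mem_coe]
    by_cases hia : i < a
    · have e1 : ext n a m' v i = v i := ext_of_le (le_of_lt hia)
      have e2 : ext n a m' v (i+1) = v (i+1) := ext_of_le (by omega)
      have hDv : i ∈ Des a v ↔ i ∈ (↑(I.erase a) : Set ℕ) := by rw [hd]
      simp only [Des, Set.mem_setOf_eq, Finset.mem_coe, Finset.mem_erase] at hDv
      rw [e1, e2]
      constructor
      · rintro ⟨hi1, _, hlt⟩
        exact (hDv.mp ⟨hi1, hia, hlt⟩).2
      · intro hiI
        obtain ⟨hi1, _, hlt⟩ := hDv.mpr ⟨by omega, hiI⟩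
        exact ⟨hi1, by omega, hlt⟩
    · by_cases hia2 : i = a
      · have e1 : ext n a m' v i = v a := by rw [hia2]; exact ext_of_le le_rfl
        have e2 : ext n a m' v (i+1) = 1 := by
          rw [hia2, ext_suffix (by omega) (by omega)]
          have h1S : 1 ∈ {j | (a+1) - a ≤ cumR a m' v j} := by
            simp only [Set.mem_setOf_eq]
            have hc1 : cumR a m' v 1 = m' - mult a v 1 := by
              unfold cumR
              rw [show Finset.Icc 1 1 = {1} from rfl, Finset.sum_singleton]
            omega
          have hub := Nat.sInf_le h1S
          have hlb := e_pos (show a < a + 1 by omega) ⟨1, h1S⟩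
          omega
        rw [e1, e2]
        exact iff_of_true ⟨by omega, by omega, by omega⟩ (hia2 ▸ haI)
      · -- i > a : no descent, and i ∉ I
        have hai : a < i := by omega
        apply iff_of_false
        · rintro ⟨hi1, hiL, hlt⟩
          have e1 : ext n a m' v i = sInf {j | i - a ≤ cumR a m' v j} :=
            ext_suffix hai (by omega)
          have e2 : ext n a m' v (i+1) = sInf {j | (i+1) - a ≤ cumR a m' v j} :=
            ext_suffix (by omega) (by omega)
          have hne2 : {j | (i+1) - a ≤ cumR a m' v j}.Nonempty :=
            ⟨n, Eset_ne h1 h2 (by omega)⟩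
          have hmem := Nat.sInf_mem hne2
          simp only [Set.mem_setOf_eq] at hmem
          have hmono : sInf {j | i - a ≤ cumR a m' v j}
              ≤ sInf {j | (i+1) - a ≤ cumR a m' v j} :=
            (e_char h1 h2 (by omega)).mpr (by omega)
          rw [e1, e2] at hlt
          omega
        · intro hiI
          exact absurd (hIle i hiI) (by omega)
  · -- multiplicities
    intro j hj
    rw [Finset.mem_Icc] at hj
    unfold mult
    rw [filter_Icc_split a (n * m') (le_of_lt haL)]
    have hpart1 : ((Finset.Icc 1 a).filter fun i => ext n a m' v i = j).card = mult a v j := by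
      unfold mult
      congr 1
      apply Finset.filter_congr
      intro i hi
      rw [Finset.mem_Icc] at hi
      rw [ext_of_le hi.2]
    have hpart2 : ((Finset.Icc (a+1) (n * m')).filter fun i => ext n a m' v i = j)
        = Finset.Icc (a + cumR a m' v (j-1) + 1) (a + cumR a m' v j) := by
      ext x
      simp only [Finset.mem_filter, Finset.mem_Icc]
      constructor
      · rintro ⟨⟨hx1, hx2⟩, hxe⟩
        rw [ext_suffix (by omega) hx2] at hxe
        have hc1 : x - a ≤ cumR a m' v j :=
          (e_char h1 h2 hx2).mp (le_of_eq hxe)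
        have hc2 : ¬ (x - a ≤ cumR a m' v (j-1)) := by
          intro hcon
          have := (e_char h1 h2 hx2).mpr hcon
          omega
        omega
      · rintro ⟨hx1, hx2⟩
        have hcumj : cumR a m' v j ≤ n * m' - a := by
          have h := cum_top h1 h2
          have := cum_mono (v := v) (a := a) (m' := m') hj.2
          omega
        have hxL : x ≤ n * m' := by omega
        have hxa : a < x := by omega
        refine ⟨⟨by omega, hxL⟩, ?_⟩
        rw [ext_suffix hxa hxL]
        have hc1 : sInf {j' | x - a ≤ cumR a m' v j'} ≤ j :=
          (e_char h1 h2 hxL).mpr (by omega)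
        have hc2 : ¬ (sInf {j' | x - a ≤ cumR a m' v j'} ≤ j - 1) := by
          intro hcon
          have := (e_char h1 h2 hxL).mp hcon
          omega
        omega
    rw [hpart1, hpart2, Nat.card_Icc]
    have hst := cum_succ (v := v) (a := a) (m' := m') hj.1
    have hmle := h2 j (Finset.mem_Icc.mpr hj)
    omega

end EXT

/-- Reconstruction: any word in the `dP m` defining set equals the canonical extension
of its own prefix. -/
lemma recon {n a m : ℕ} {w : ℕ → ℕ} {I : Finset ℕ}
    (han : a < n) (hm : 1 ≤ m)
    (hwseq : w ∈ Seqs (n * m) n) (hdes : Des (n * m) w = ↑I)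
    (hmult : ∀ j ∈ Finset.Icc 1 n, mult (n * m) w j = m)
    (hIle : ∀ x ∈ I, x ≤ a) :
    ∀ i, w i = ext n a m w i := by
  have haL : a < n * m := lt_of_lt_of_le han (by nlinarith)
  have h1 : ∀ i ∈ Finset.Icc 1 a, w i ∈ Finset.Icc 1 n := by
    intro i hi
    rw [Finset.mem_Icc] at hi
    exact hwseq.1 i (Finset.mem_Icc.mpr ⟨hi.1, by omega⟩)
  have hprefsub : ∀ j, mult a w j ≤ mult (n * m) w j := by
    intro j
    exact Finset.card_le_card
      (Finset.filter_subset_filter _ (Finset.Icc_subset_Icc_right (le_of_lt haL)))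
  have h2 : ∀ j ∈ Finset.Icc 1 n, mult a w j ≤ m := fun j hj =>
    le_trans (hprefsub j) (le_of_eq (hmult j hj))
  -- suffix weakly increasing
  have hmono : ∀ i1 i2, a < i1 → i1 ≤ i2 → i2 ≤ n * m → w i1 ≤ w i2 := by
    intro i1 i2 hi1 h12 h2L
    have key : ∀ k, i1 + k ≤ n * m → w i1 ≤ w (i1 + k) := by
      intro k
      induction k with
      | zero => intro _; simp
      | succ k ih =>
        intro hk
        refine le_trans (ih (by omega)) ?_
        have hnd : i1 + k ∉ Des (n * m) w := by
          rw [hdes]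
          intro hmem
          rw [Finset.mem_coe] at hmem
          exact absurd (hIle _ hmem) (by omega)
        simp only [Des, Set.mem_setOf_eq, not_and, not_lt] at hnd
        have := hnd (by omega) (by omega)
        exact this
    have := key (i2 - i1) (by omega)
    rwa [show i1 + (i2 - i1) = i2 by omega] at this
  -- counting
  have hsplitm : ∀ l, mult a w l
      + ((Finset.Icc (a+1) (n * m)).filter fun i => w i = l).card = mult (n * m) w l := by
    intro l
    unfold mult
    rw [filter_Icc_split a (n * m) (le_of_lt haL)]
  have hcount : ∀ j, 1 ≤ j → j ≤ n →
      ((Finset.Icc (a+1) (n * m)).filter fun i => w i ≤ j).card = cumR a m w j := by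
    intro j hj1 hj2
    have hfibcond : ∀ x ∈ (Finset.Icc (a+1) (n * m)).filter fun i => w i ≤ j,
        w x ∈ Finset.Icc 1 j := by
      intro x hx
      rw [Finset.mem_filter, Finset.mem_Icc] at hx
      have hx1 : w x ∈ Finset.Icc 1 n := hwseq.1 x (Finset.mem_Icc.mpr ⟨by omega, hx.1.2⟩)
      rw [Finset.mem_Icc] at hx1 ⊢
      exact ⟨hx1.1, hx.2⟩
    rw [Finset.card_eq_sum_card_fiberwise hfibcond]
    unfold cumR
    apply Finset.sum_congr rfl
    intro l hl
    rw [Finset.mem_Icc] at hl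
    have hfib : ((Finset.Icc (a+1) (n * m)).filter fun i => w i ≤ j).filter (fun i => w i = l)
        = (Finset.Icc (a+1) (n * m)).filter fun i => w i = l := by
      rw [Finset.filter_filter]
      apply Finset.filter_congr
      intro x _
      constructor
      · rintro ⟨_, h⟩; exact h
      · intro h; exact ⟨by omega, h⟩
    rw [hfib]
    have := hsplitm l
    have hml := hmult l (Finset.mem_Icc.mpr ⟨hl.1, by omega⟩)
    omega
  -- characterization
  have hchar : ∀ i', a < i' → i' ≤ n * m → ∀ j, 1 ≤ j → j ≤ n →
      (w i' ≤ j ↔ i' - a ≤ cumR a m w j) := by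
    intro i' hi1 hi2 j hj1 hj2
    constructor
    · intro hle
      have hsub : Finset.Icc (a+1) i' ⊆ (Finset.Icc (a+1) (n * m)).filter fun i => w i ≤ j := by
        intro x hx
        rw [Finset.mem_Icc] at hx
        rw [Finset.mem_filter, Finset.mem_Icc]
        exact ⟨⟨hx.1, by omega⟩, le_trans (hmono x i' (by omega) hx.2 hi2) hle⟩
      have hcard := Finset.card_le_card hsub
      rw [hcount j hj1 hj2, Nat.card_Icc] at hcard
      omega
    · intro hle
      by_contra hgt
      push_neg at hgt
      have hsub : ((Finset.Icc (a+1) (n * m)).filter fun i => w i ≤ j)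
          ⊆ Finset.Icc (a+1) (i'-1) := by
        intro x hx
        rw [Finset.mem_filter, Finset.mem_Icc] at hx
        rw [Finset.mem_Icc]
        refine ⟨hx.1.1, ?_⟩
        by_contra hxx
        push_neg at hxx
        have := hmono i' x hi1 (by omega) hx.1.2
        omega
      have hcard := Finset.card_le_card hsub
      rw [hcount j hj1 hj2, Nat.card_Icc] at hcard
      omega
  intro i
  by_cases h : i ≤ a
  · rw [ext_of_le h]
  · by_cases h2' : i ≤ n * m
    · rw [ext_suffix (by omega) h2']
      have hwi : w i ∈ Finset.Icc 1 n := hwseq.1 i (Finset.mem_Icc.mpr ⟨by omega, h2'⟩)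
      rw [Finset.mem_Icc] at hwi
      have hiS : w i ∈ {j | i - a ≤ cumR a m w j} :=
        (hchar i (by omega) h2' (w i) hwi.1 hwi.2).mp le_rfl
      have h5 : sInf {j | i - a ≤ cumR a m w j} ≤ w i := Nat.sInf_le hiS
      have hmem := Nat.sInf_mem (⟨w i, hiS⟩ : {j | i - a ≤ cumR a m w j}.Nonempty)
      simp only [Set.mem_setOf_eq] at hmem
      have hpos : 1 ≤ sInf {j | i - a ≤ cumR a m w j} := e_pos (by omega) ⟨w i, hiS⟩
      have h6 : w i ≤ sInf {j | i - a ≤ cumR a m w j} :=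
        (hchar i (by omega) h2' _ hpos (by omega)).mpr hmem
      omega
    · rw [ext_big (by omega) h2']
      exact hwseq.2 i (by rw [Finset.mem_Icc]; omega)

lemma seqs_finite (ℓ n : ℕ) : (Seqs ℓ n).Finite := by
  have hsub : Seqs ℓ n ⊆
      (fun g : Fin (ℓ+1) → Fin (n+1) => fun i => if h : i < ℓ + 1 then (g ⟨i, h⟩ : ℕ) else 0)
        '' Set.univ := by
    intro w hw
    refine ⟨fun i => ⟨min (w i) n, by omega⟩, trivial, ?_⟩
    funext i
    by_cases hi : i < ℓ + 1
    · simp only [dif_pos hi]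
      by_cases hm : i ∈ Finset.Icc 1 ℓ
      · have := hw.1 i hm
        rw [Finset.mem_Icc] at this
        show min (w i) n = w i
        omega
      · have := hw.2 i hm
        simp [this]
    · simp only [dif_neg hi]
      have hni : i ∉ Finset.Icc 1 ℓ := by rw [Finset.mem_Icc]; omega
      exact (hw.2 i hni).symm
  exact Set.Finite.subset (Set.toFinite _) hsub

end Stmt0Aux

/-- for positive integers `n, m` with `n > α_t`,
`𝔡^m(I,n) ≤ 𝔡^{m+1}(I,n)`. -/
theorem stmt_0 (I : Finset ℕ) (hI : I.Nonempty) (hIpos : ∀ x ∈ I, 1 ≤ x)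
    (n m : ℕ) (hm : 1 ≤ m) (hn : I.sup id < n) :
    dP m I n ≤ dP (m + 1) I n := by
  classical
  set a := I.sup id with ha
  have haI : a ∈ I := by
    obtain ⟨b, hb, he⟩ := Finset.exists_mem_eq_sup I hI id
    rw [ha, he]; exact hb
  have hIle : ∀ x ∈ I, x ≤ a := fun x hx => Finset.le_sup (f := id) hx
  have ha1 : 1 ≤ a := hIpos a haI
  have haL : a < n * m := lt_of_lt_of_le hn (by nlinarith)
  have haL2 : a < n * (m + 1) := lt_of_lt_of_le hn (by nlinarith)
  unfold dP
  refine Set.ncard_le_ncard_of_injOn (fun w => Stmt0Aux.ext n a (m + 1) w) ?_ ?_ ?_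
  · -- maps to
    rintro w ⟨hwseq, hwdes, hwmult⟩
    have hv0 : w 0 = 0 := hwseq.2 0 (by simp)
    have h1 : ∀ i ∈ Finset.Icc 1 a, w i ∈ Finset.Icc 1 n := by
      intro i hi
      rw [Finset.mem_Icc] at hi
      exact hwseq.1 i (Finset.mem_Icc.mpr ⟨hi.1, by omega⟩)
    have hpref : ∀ j ∈ Finset.Icc 1 n, mult a w j ≤ m := by
      intro j hj
      have hle : mult a w j ≤ mult (n * m) w j :=
        Finset.card_le_card
          (Finset.filter_subset_filter _ (Finset.Icc_subset_Icc_right (le_of_lt haL)))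
      rw [hwmult j hj] at hle
      exact hle
    have h2 : ∀ j ∈ Finset.Icc 1 n, mult a w j ≤ m + 1 := fun j hj =>
      le_trans (hpref j hj) (by omega)
    have hlow : mult a w 1 < m + 1 := by
      have := hpref 1 (Finset.mem_Icc.mpr ⟨le_rfl, by omega⟩)
      omega
    have hva : 2 ≤ w a := by
      have hmemD : a ∈ Des (n * m) w := by rw [hwdes]; exact haI
      obtain ⟨_, _, hlt⟩ := hmemD
      have : w (a + 1) ∈ Finset.Icc 1 n :=
        hwseq.1 (a + 1) (Finset.mem_Icc.mpr ⟨by omega, by omega⟩)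
      rw [Finset.mem_Icc] at this
      omega
    have hd : Des a w = ↑(I.erase a) := by
      apply Set.ext
      intro i
      simp only [Des, Set.mem_setOf_eq, Finset.mem_coe, Finset.mem_erase]
      constructor
      · rintro ⟨hi1, hia, hlt⟩
        have : i ∈ Des (n * m) w := ⟨hi1, by omega, hlt⟩
        rw [hwdes, Finset.mem_coe] at this
        exact ⟨by omega, this⟩
      · rintro ⟨hne, hiI⟩
        have : i ∈ Des (n * m) w := by rw [hwdes]; exact hiI
        obtain ⟨hi1, _, hlt⟩ := this
        have hile : i ≤ a := hIle i hiI
        exact ⟨hi1, by omega, hlt⟩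
    obtain ⟨hs, hdes', hmul'⟩ := Stmt0Aux.ext_mem I hn (by omega) hv0 h1 h2 hd hva hlow
      haI hIle hIpos
    exact ⟨hs, hdes', hmul'⟩
  · -- injective
    rintro w ⟨hwseq, hwdes, hwmult⟩ w' ⟨hwseq', hwdes', hwmult'⟩ heq
    have hpre : ∀ i ∈ Finset.Icc 1 a, w i = w' i := by
      intro i hi
      rw [Finset.mem_Icc] at hi
      have := congrFun heq i
      simpa [Stmt0Aux.ext_of_le hi.2] using this
    have hcum : Stmt0Aux.cumR a m w = Stmt0Aux.cumR a m w' := by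
      funext j
      unfold Stmt0Aux.cumR
      apply Finset.sum_congr rfl
      intro l _
      rw [Stmt0Aux.mult_congr hpre l]
    funext i
    rw [Stmt0Aux.recon hn hm hwseq hwdes hwmult hIle i,
        Stmt0Aux.recon hn hm hwseq' hwdes' hwmult' hIle i]
    unfold Stmt0Aux.ext
    by_cases h : i ≤ a
    · rw [if_pos h, if_pos h]
      by_cases h0 : i = 0
      · subst h0
        rw [hwseq.2 0 (by simp), hwseq'.2 0 (by simp)]
      · exact hpre i (Finset.mem_Icc.mpr ⟨by omega, h⟩)
    · rw [if_neg h, if_neg h, hcum]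
  · exact Set.Finite.subset (Stmt0Aux.seqs_finite (n * (m + 1)) n) (fun x hx => hx.1)
end

section
/- For every positive integer n and all integers m, m′ with m ≥ α_t − t + 1 and m′ ≥ α_t − t + 1, one has 𝔡^m(I,n) = 𝔡^{m′}(I,n); that is, the function m ↦ 𝔡^m(I,n) stabilizes for m ≥ α_t − t + 1. -/
open Finset

namespace StabAux

/-- a downward-closed subset of `[1,L]` is an initial segment. -/
lemma initial_seg {L : ℕ} {S : Finset ℕ} (hS : S ⊆ Finset.Icc 1 L)
    (hdc : ∀ a b : ℕ, 1 ≤ a → a ≤ b → b ∈ S → a ∈ S) : S = Finset.Icc 1 S.card := by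
  rcases S.eq_empty_or_nonempty with h | h
  · simp [h]
  · have hsub : S = Finset.Icc 1 (S.max' h) := by
      apply Finset.Subset.antisymm
      · intro b hb
        have := Finset.mem_Icc.mp (hS hb)
        exact Finset.mem_Icc.mpr ⟨this.1, S.le_max' b hb⟩
      · intro a ha
        have ha' := Finset.mem_Icc.mp ha
        exact hdc a _ ha'.1 ha'.2 (S.max'_mem h)
    obtain ⟨M, hM⟩ : ∃ M, S = Finset.Icc 1 M := ⟨_, hsub⟩
    rw [hM]
    simp

lemma sum_mult {ℓ n : ℕ} {v : ℕ → ℕ} (hv : ∀ i ∈ Finset.Icc 1 ℓ, v i ∈ Finset.Icc 1 n) :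
    ∑ j ∈ Finset.Icc 1 n, mult ℓ v j = ℓ := by
  have := Finset.card_eq_sum_card_fiberwise hv
  simp only [Nat.card_Icc] at this
  unfold mult
  omega

lemma count_le_eq_sum {L j : ℕ} {g : ℕ → ℕ} (hpos : ∀ k ∈ Finset.Icc 1 L, 1 ≤ g k) :
    ((Finset.Icc 1 L).filter (fun k => g k ≤ j)).card
      = ∑ l ∈ Finset.Icc 1 j, ((Finset.Icc 1 L).filter (fun k => g k = l)).card := by
  rw [Finset.card_eq_sum_card_fiberwise (f := g) (t := Finset.Icc 1 j)
    (fun k hk => by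
      simp only [Finset.coe_filter, Finset.mem_filter, Set.mem_setOf_eq] at hk
      exact Finset.mem_Icc.mpr ⟨hpos k hk.1, hk.2⟩)]
  refine Finset.sum_congr rfl (fun l hl => ?_)
  congr 1
  rw [Finset.filter_filter]
  refine Finset.filter_congr (fun k hk => ?_)
  have hl' := (Finset.mem_Icc.mp hl).2
  constructor
  · exact fun h => h.2
  · exact fun h => ⟨h ▸ hl', h⟩

lemma le_iff_mono {L : ℕ} {g : ℕ → ℕ}
    (hmono : ∀ a b : ℕ, 1 ≤ a → a ≤ b → b ≤ L → g a ≤ g b) (j : ℕ)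
    {k : ℕ} (hk : k ∈ Finset.Icc 1 L) :
    (g k ≤ j ↔ k ≤ ((Finset.Icc 1 L).filter (fun i => g i ≤ j)).card) := by
  set T := (Finset.Icc 1 L).filter (fun i => g i ≤ j) with hT
  have hTsub : T ⊆ Finset.Icc 1 L := Finset.filter_subset _ _
  have hTdc : ∀ a b : ℕ, 1 ≤ a → a ≤ b → b ∈ T → a ∈ T := by
    intro a b ha hab hb
    simp only [hT, Finset.mem_filter, Finset.mem_Icc] at hb ⊢
    exact ⟨⟨ha, le_trans hab hb.1.2⟩, le_trans (hmono a b ha hab hb.1.2) hb.2⟩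
  have hseg := initial_seg hTsub hTdc
  have hk' := Finset.mem_Icc.mp hk
  constructor
  · intro h
    have : k ∈ T := by simp [hT, Finset.mem_filter, hk, h]
    rw [hseg] at this
    exact (Finset.mem_Icc.mp this).2
  · intro h
    have : k ∈ T := by rw [hseg]; exact Finset.mem_Icc.mpr ⟨hk'.1, h⟩
    simp only [hT, Finset.mem_filter] at this
    exact this.2

lemma mult_bound {α : ℕ} {v : ℕ → ℕ} {D : Finset ℕ} (hα : 1 ≤ α)
    (hD : ∀ d ∈ D, 1 ≤ d ∧ d < α ∧ v (d + 1) < v d)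
    (hv1 : ∀ i ∈ Finset.Icc 1 α, 1 ≤ v i) :
    (∀ j, mult α v j + D.card ≤ α) ∧ (mult α v 1 + D.card = α → v α = 1) := by
  classical
  have hαD : α ∉ D := fun h => absurd (hD α h).2.1 (lt_irrefl α)
  set h : ℕ → ℕ := fun i =>
    if hne : ((Finset.Icc i α).filter (fun p => p ∉ D)).Nonempty
    then ((Finset.Icc i α).filter (fun p => p ∉ D)).min' hne else 0 with hhdef
  have hne : ∀ i, i ≤ α → ((Finset.Icc i α).filter (fun p => p ∉ D)).Nonempty := by
    intro i hi
    exact ⟨α, by simp [Finset.mem_filter, Finset.mem_Icc, hi, hαD]⟩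
  have hmem : ∀ i, i ≤ α → h i ∈ (Finset.Icc i α).filter (fun p => p ∉ D) := by
    intro i hi
    simp only [hhdef, dif_pos (hne i hi)]
    exact Finset.min'_mem _ _
  have hbetween : ∀ i, i ≤ α → ∀ p, i ≤ p → p < h i → p ∈ D := by
    intro i hi p hip hp
    by_contra hpD
    have hpα : p ≤ α := by
      have := Finset.mem_Icc.mp (Finset.mem_filter.mp (hmem i hi)).1
      omega
    have hpmem : p ∈ (Finset.Icc i α).filter (fun p => p ∉ D) :=
      Finset.mem_filter.mpr ⟨Finset.mem_Icc.mpr ⟨hip, hpα⟩, hpD⟩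
    have : h i ≤ p := by
      simp only [hhdef, dif_pos (hne i hi)]
      exact Finset.min'_le _ _ hpmem
    omega
  have hchain : ∀ i, i ≤ α → ∀ b, i < b → b ≤ h i → v b < v i := by
    intro i hi b
    induction b with
    | zero => omega
    | succ b ih =>
      intro hib hbh
      have hbD : b ∈ D := hbetween i hi b (by omega) (by omega)
      have hdesc := (hD b hbD).2.2
      rcases Nat.lt_or_ge i b with hlt | hge
      · exact lt_trans hdesc (ih hlt (by omega))
      · have : i = b := by omega
        rw [this]; exact hdesc
  set Q : Finset ℕ := (Finset.Icc 1 α).filter (fun p => p ∉ D) with hQdef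
  have hQcard : Q.card + D.card = α := by
    have hsub : D ⊆ Finset.Icc 1 α := by
      intro d hd
      have := hD d hd
      exact Finset.mem_Icc.mpr ⟨this.1, by omega⟩
    have h1 : ((Finset.Icc 1 α).filter (fun p => p ∈ D)).card = D.card := by
      congr 1
      rw [Finset.filter_mem_eq_inter]
      exact Finset.inter_eq_right.mpr hsub
    have h2 : ((Finset.Icc 1 α).filter (fun p => p ∈ D)).card
        + ((Finset.Icc 1 α).filter (fun p => p ∉ D)).card = (Finset.Icc 1 α).card :=
      Finset.card_filter_add_card_filter_not _
    simp only [Nat.card_Icc] at h2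
    rw [← hQdef] at h2
    omega
  have hmaps : ∀ j : ℕ, ∀ i ∈ (Finset.Icc 1 α).filter (fun i => v i = j), h i ∈ Q := by
    intro j i hi
    have hi' := Finset.mem_Icc.mp (Finset.mem_filter.mp hi).1
    have := Finset.mem_filter.mp (hmem i hi'.2)
    have hIcc := Finset.mem_Icc.mp this.1
    exact Finset.mem_filter.mpr ⟨Finset.mem_Icc.mpr ⟨by omega, hIcc.2⟩, this.2⟩
  have hinj : ∀ j : ℕ, ∀ i₁ ∈ (Finset.Icc 1 α).filter (fun i => v i = j),
      ∀ i₂ ∈ (Finset.Icc 1 α).filter (fun i => v i = j), h i₁ = h i₂ → i₁ = i₂ := by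
    intro j i₁ hi₁ i₂ hi₂ heq
    simp only [Finset.mem_filter, Finset.mem_Icc] at hi₁ hi₂
    by_contra hne'
    rcases Nat.lt_or_ge i₁ i₂ with hlt | hge
    · have hi₂h : i₂ ≤ h i₁ := by
        have := Finset.mem_Icc.mp (Finset.mem_filter.mp (hmem i₂ hi₂.1.2)).1
        omega
      have := hchain i₁ hi₁.1.2 i₂ hlt hi₂h
      omega
    · have hlt : i₂ < i₁ := by omega
      have hi₁h : i₁ ≤ h i₂ := by
        have := Finset.mem_Icc.mp (Finset.mem_filter.mp (hmem i₁ hi₁.1.2)).1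
        omega
      have := hchain i₂ hi₂.1.2 i₁ hlt hi₁h
      omega
  have hble : ∀ j, mult α v j + D.card ≤ α := by
    intro j
    have := Finset.card_le_card_of_injOn h (hmaps j)
      (fun a ha b hb => hinj j a ha b hb)
    unfold mult
    omega
  refine ⟨hble, ?_⟩
  intro heq
  have hcard : Q.card ≤ ((Finset.Icc 1 α).filter (fun i => v i = 1)).card := by
    unfold mult at heq; omega
  have hsurj := Finset.surj_on_of_inj_on_of_card_le
    (f := fun i _ => h i) (fun a ha => hmaps 1 a ha)
    (fun a₁ a₂ ha₁ ha₂ he => hinj 1 a₁ ha₁ a₂ ha₂ he) hcard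
  have hαQ : α ∈ Q := Finset.mem_filter.mpr ⟨Finset.mem_Icc.mpr ⟨hα, le_refl α⟩, hαD⟩
  obtain ⟨i, hiP, hih⟩ := hsurj α hαQ
  simp only [Finset.mem_filter, Finset.mem_Icc] at hiP
  have hih' : α = h i := hih
  rcases Nat.lt_or_ge i α with hlt | hge
  · have := hchain i hiP.1.2 α hlt (le_of_eq hih')
    have := hv1 α (Finset.mem_Icc.mpr ⟨hα, le_refl α⟩)
    omega
  · have : i = α := by omega
    rw [← this, hiP.2]

def tailS (α m : ℕ) (v : ℕ → ℕ) (j : ℕ) : ℕ := ∑ l ∈ Finset.Icc 1 j, (m - mult α v l)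

def tailF (α m n : ℕ) (v : ℕ → ℕ) (k : ℕ) : ℕ :=
  1 + ((Finset.Icc 1 n).filter (fun j => tailS α m v j < k)).card

lemma tailS_mono {α m : ℕ} {v : ℕ → ℕ} {j j' : ℕ} (h : j ≤ j') :
    tailS α m v j ≤ tailS α m v j' :=
  Finset.sum_le_sum_of_subset (Finset.Icc_subset_Icc_right h)

lemma tailS_succ (α m : ℕ) (v : ℕ → ℕ) (j : ℕ) :
    tailS α m v (j + 1) = tailS α m v j + (m - mult α v (j + 1)) :=
  Finset.sum_Icc_succ_top (by omega) _

lemma tailS_zero (α m : ℕ) (v : ℕ → ℕ) : tailS α m v 0 = 0 := by simp [tailS]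

lemma tailF_pos (α m n : ℕ) (v : ℕ → ℕ) (k : ℕ) : 1 ≤ tailF α m n v k := by
  unfold tailF; omega

lemma tailF_mono (α m n : ℕ) (v : ℕ → ℕ) {k k' : ℕ} (h : k ≤ k') :
    tailF α m n v k ≤ tailF α m n v k' := by
  unfold tailF
  have : ((Finset.Icc 1 n).filter (fun j => tailS α m v j < k))
      ⊆ ((Finset.Icc 1 n).filter (fun j => tailS α m v j < k')) := by
    intro x hx
    simp only [Finset.mem_filter] at hx ⊢
    exact ⟨hx.1, by omega⟩
  have := Finset.card_le_card this
  omega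

lemma tailF_le_iff {α m n : ℕ} {v : ℕ → ℕ} {j k : ℕ} (hj : j ≤ n) (hk : 1 ≤ k) :
    tailF α m n v k ≤ j ↔ k ≤ tailS α m v j := by
  constructor
  · intro h
    by_contra hc
    push_neg at hc
    have hsub : Finset.Icc 1 j ⊆ (Finset.Icc 1 n).filter (fun j' => tailS α m v j' < k) := by
      intro j' hj'
      have hj'' := Finset.mem_Icc.mp hj'
      refine Finset.mem_filter.mpr ⟨Finset.mem_Icc.mpr ⟨hj''.1, le_trans hj''.2 hj⟩, ?_⟩
      have := tailS_mono (α := α) (m := m) (v := v) hj''.2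
      omega
    have := Finset.card_le_card hsub
    simp only [Nat.card_Icc] at this
    unfold tailF at h
    omega
  · intro h
    rcases Nat.eq_zero_or_pos j with rfl | hj0
    · have := tailS_zero α m v
      omega
    · have hsub : ((Finset.Icc 1 n).filter (fun j' => tailS α m v j' < k))
          ⊆ Finset.Icc 1 (j - 1) := by
        intro j' hj'
        simp only [Finset.mem_filter, Finset.mem_Icc] at hj' ⊢
        refine ⟨hj'.1.1, ?_⟩
        by_contra hc
        have hjj : j ≤ j' := by omega
        have := tailS_mono (α := α) (m := m) (v := v) hjj
        omega
      have := Finset.card_le_card hsub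
      simp only [Nat.card_Icc] at this
      unfold tailF
      omega

lemma tailF_count {α m n : ℕ} {v : ℕ → ℕ} {j : ℕ} (hj : 1 ≤ j) (hjn : j ≤ n) :
    ((Finset.Icc 1 (tailS α m v n)).filter (fun k => tailF α m n v k = j)).card
      = m - mult α v j := by
  obtain ⟨j', rfl⟩ : ∃ j', j = j' + 1 := ⟨j - 1, by omega⟩
  have hfe : ((Finset.Icc 1 (tailS α m v n)).filter (fun k => tailF α m n v k = j' + 1))
      = Finset.Icc (tailS α m v j' + 1) (tailS α m v (j' + 1)) := by
    ext k
    simp only [Finset.mem_filter, Finset.mem_Icc]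
    constructor
    · rintro ⟨⟨hk1, _⟩, hfk⟩
      have h1 : tailF α m n v k ≤ j' + 1 := le_of_eq hfk
      rw [tailF_le_iff hjn hk1] at h1
      have h2 : ¬ tailF α m n v k ≤ j' := by omega
      rw [tailF_le_iff (by omega) hk1] at h2
      omega
    · rintro ⟨hk1, hk2⟩
      have hk1' : 1 ≤ k := by omega
      have hkn : k ≤ tailS α m v n := le_trans hk2 (tailS_mono hjn)
      have h1 : tailF α m n v k ≤ j' + 1 := (tailF_le_iff hjn hk1').mpr hk2
      have h2 : ¬ tailF α m n v k ≤ j' := by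
        rw [tailF_le_iff (by omega) hk1']
        omega
      exact ⟨⟨hk1', hkn⟩, by omega⟩
  rw [hfe, Nat.card_Icc]
  have := tailS_succ α m v j'
  omega

end StabAux

open StabAux in
theorem key (I : Finset ℕ) (hI : I.Nonempty) (hIpos : ∀ x ∈ I, 1 ≤ x)
    (n : ℕ) (hn : 1 ≤ n) (m : ℕ) (hm : I.sup id - I.card + 1 ≤ m) :
    dP m I n = Ncount I n := by
  classical
  set α := I.sup id with hαdef
  obtain ⟨a, haI, hae⟩ := Finset.exists_mem_eq_sup I hI id
  have hαI : α ∈ I := by rw [hαdef, hae]; exact haI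
  have hle : ∀ x ∈ I, x ≤ α := fun x hx => Finset.le_sup (f := id) hx
  have hα1 : 1 ≤ α := le_trans (hIpos a haI) (hle a haI)
  have htα : I.card ≤ α := by
    have hsub : I ⊆ Finset.Icc 1 α := fun x hx => Finset.mem_Icc.mpr ⟨hIpos x hx, hle x hx⟩
    have := Finset.card_le_card hsub
    simpa [Nat.card_Icc] using this
  have hmb : α + 1 ≤ I.card + m := by omega
  set D := I.erase α with hDdef
  have hDcard : D.card + 1 = I.card := by
    rw [hDdef, Finset.card_erase_of_mem hαI]
    have := Finset.card_pos.mpr hI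
    omega
  have hDmem : ∀ d ∈ D, 1 ≤ d ∧ d < α := by
    intro d hd
    have hdI := Finset.mem_of_mem_erase hd
    have hdne := Finset.ne_of_mem_erase hd
    exact ⟨hIpos d hdI, lt_of_le_of_ne (hle d hdI) hdne⟩
  set Nset : Set (ℕ → ℕ) := {v ∈ Seqs α n | Des α v = ↑D ∧ v α ≠ 1} with hNsetdef
  set Pset : Set (ℕ → ℕ) := {w ∈ Seqs (n * m) n |
    Des (n * m) w = ↑I ∧ ∀ j ∈ Finset.Icc 1 n, mult (n * m) w j = m} with hPsetdef
  set F : (ℕ → ℕ) → ℕ → ℕ := fun v i =>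
    if i ∈ Finset.Icc 1 (n * m) then (if i ≤ α then v i else tailF α m n v (i - α)) else 0
    with hFdef
  set G : (ℕ → ℕ) → ℕ → ℕ := fun w i => if i ∈ Finset.Icc 1 α then w i else 0 with hGdef
  -- facts about elements of Nset
  have hNfacts : ∀ v ∈ Nset, (∀ j, mult α v j ≤ m) ∧ mult α v 1 < m ∧
      α + tailS α m v n = n * m := by
    intro v hv
    obtain ⟨⟨hvr, hvz⟩, hvDes, hvα⟩ := hv
    have hv1 : ∀ i ∈ Finset.Icc 1 α, 1 ≤ v i := fun i hi => (Finset.mem_Icc.mp (hvr i hi)).1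
    have hDes' : ∀ d ∈ D, 1 ≤ d ∧ d < α ∧ v (d + 1) < v d := by
      intro d hd
      have hd' : d ∈ Des α v := by rw [hvDes]; exact hd
      exact hd'
    have hmb2 := mult_bound hα1 hDes' hv1
    have hmle : ∀ j, mult α v j ≤ m := by
      intro j
      have := hmb2.1 j
      omega
    have hm1 : mult α v 1 < m := by
      by_contra hc
      push_neg at hc
      have h1 := hmb2.1 1
      have heq : mult α v 1 + D.card = α := by
        have := hmle 1
        omega
      exact hvα (hmb2.2 heq)
    refine ⟨hmle, hm1, ?_⟩
    have hsum : ∑ j ∈ Finset.Icc 1 n, mult α v j = α := sum_mult hvr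
    have hadd : ∑ j ∈ Finset.Icc 1 n, (mult α v j + (m - mult α v j))
        = ∑ _j ∈ Finset.Icc 1 n, m :=
      Finset.sum_congr rfl (fun j _ => by have := hmle j; omega)
    rw [Finset.sum_add_distrib, hsum] at hadd
    have hadd' : α + ∑ j ∈ Finset.Icc 1 n, (m - mult α v j) = ∑ _j ∈ Finset.Icc 1 n, m :=
      hadd
    have hconst : ∑ _j ∈ Finset.Icc 1 n, m = n * m := by
      rw [Finset.sum_const, Nat.card_Icc]
      simp [Nat.smul_one_eq_cast]
    unfold tailS
    omega
  have hNlt : ∀ v ∈ Nset, α < n * m := by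
    intro v hv
    obtain ⟨hmle, hm1, hL⟩ := hNfacts v hv
    have h1n : (1 : ℕ) ∈ Finset.Icc 1 n := Finset.mem_Icc.mpr ⟨le_refl 1, hn⟩
    have h2 : m - mult α v 1 ≤ tailS α m v n :=
      Finset.single_le_sum (f := fun j => m - mult α v j) (fun i _ => Nat.zero_le _) h1n
    omega
  -- MapsTo F Nset Pset
  have hmapsF : ∀ v ∈ Nset, F v ∈ Pset := by
    intro v hv
    have hαnm : α < n * m := hNlt v hv
    obtain ⟨hmle, hm1, hL⟩ := hNfacts v hv
    obtain ⟨⟨hvr, hvz⟩, hvDes, hvα⟩ := hv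
    have hv1 : ∀ i ∈ Finset.Icc 1 α, 1 ≤ v i := fun i hi => (Finset.mem_Icc.mp (hvr i hi)).1
    have hFlow : ∀ i, 1 ≤ i → i ≤ α → F v i = v i := by
      intro i h1 h2
      simp only [hFdef]
      rw [if_pos (Finset.mem_Icc.mpr ⟨h1, by omega⟩), if_pos h2]
    have hFhigh : ∀ i, α < i → i ≤ n * m → F v i = tailF α m n v (i - α) := by
      intro i h1 h2
      simp only [hFdef]
      rw [if_pos (Finset.mem_Icc.mpr ⟨by omega, h2⟩), if_neg (by omega)]
    have hDesv : ∀ i, i ∈ Des α v ↔ i ∈ D := by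
      intro i
      rw [hvDes]
      exact Iff.rfl
    have htailS1 : 1 ≤ tailS α m v 1 := by
      have h0 := tailS_succ α m v 0
      rw [tailS_zero] at h0
      norm_num at h0
      omega
    have hF1 : F v (α + 1) = 1 := by
      rw [hFhigh (α + 1) (by omega) (by omega)]
      have h1 : tailF α m n v (α + 1 - α) ≤ 1 := by
        have : α + 1 - α = 1 := by omega
        rw [this]
        exact (tailF_le_iff hn (le_refl 1)).mpr htailS1
      have h2 := tailF_pos α m n v (α + 1 - α)
      omega
    refine ⟨⟨?_, ?_⟩, ?_, ?_⟩
    · intro i hi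
      have hi' := Finset.mem_Icc.mp hi
      rcases le_or_gt i α with h | h
      · rw [hFlow i hi'.1 h]
        exact hvr i (Finset.mem_Icc.mpr ⟨hi'.1, h⟩)
      · rw [hFhigh i h hi'.2]
        refine Finset.mem_Icc.mpr ⟨tailF_pos α m n v _, ?_⟩
        exact (tailF_le_iff (le_refl n) (by omega)).mpr (by omega)
    · intro i hi
      simp only [hFdef]
      rw [if_neg hi]
    · apply Set.ext
      intro i
      constructor
      · rintro ⟨hi1, hinm, hdesc⟩
        rcases lt_trichotomy i α with hlt | heq | hgt
        · rw [hFlow i hi1 (by omega), hFlow (i + 1) (by omega) (by omega)] at hdesc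
          have : i ∈ D := (hDesv i).mp ⟨hi1, hlt, hdesc⟩
          exact Finset.mem_coe.mpr (Finset.mem_of_mem_erase (hDdef ▸ this))
        · rw [heq]; exact Finset.mem_coe.mpr hαI
        · exfalso
          rw [hFhigh i hgt (by omega), hFhigh (i + 1) (by omega) (by omega)] at hdesc
          have := tailF_mono α m n v (show i - α ≤ i + 1 - α by omega)
          omega
      · intro hiI
        have hiI' : i ∈ I := Finset.mem_coe.mp hiI
        have hiα : i ≤ α := hle i hiI'
        have hi1 : 1 ≤ i := hIpos i hiI'
        rcases Nat.lt_or_ge i α with hlt | hge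
        · have hiD : i ∈ D := Finset.mem_erase.mpr ⟨by omega, hiI'⟩
          have hdes := (hDesv i).mpr hiD
          obtain ⟨_, _, hd⟩ := hdes
          refine ⟨hi1, by omega, ?_⟩
          rw [hFlow i hi1 (by omega), hFlow (i + 1) (by omega) (by omega)]
          exact hd
        · have heq : i = α := by omega
          refine ⟨hi1, by omega, ?_⟩
          rw [heq, hF1, hFlow α hα1 (le_refl α)]
          have := hv1 α (Finset.mem_Icc.mpr ⟨hα1, le_refl α⟩)
          omega
    · intro j hj
      have hj' := Finset.mem_Icc.mp hj
      have hsplit : Finset.Icc 1 (n * m) = Finset.Icc 1 α ∪ Finset.Ioc α (n * m) := by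
        ext x
        simp only [Finset.mem_Icc, Finset.mem_union, Finset.mem_Ioc]
        omega
      have hdisj : Disjoint ((Finset.Icc 1 α).filter (fun i => F v i = j))
          ((Finset.Ioc α (n * m)).filter (fun i => F v i = j)) := by
        rw [Finset.disjoint_left]
        intro x hx1 hx2
        have h1 := (Finset.mem_Icc.mp (Finset.mem_filter.mp hx1).1).2
        have h2 := (Finset.mem_Ioc.mp (Finset.mem_filter.mp hx2).1).1
        omega
      unfold mult
      rw [hsplit, Finset.filter_union, Finset.card_union_of_disjoint hdisj]
      have h1 : ((Finset.Icc 1 α).filter (fun i => F v i = j)).card = mult α v j := by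
        unfold mult
        congr 1
        apply Finset.filter_congr
        intro i hi
        have hi' := Finset.mem_Icc.mp hi
        rw [hFlow i hi'.1 hi'.2]
      have h2 : ((Finset.Ioc α (n * m)).filter (fun i => F v i = j)).card
          = ((Finset.Icc 1 (tailS α m v n)).filter (fun k => tailF α m n v k = j)).card := by
        apply Finset.card_bij' (fun i _ => i - α) (fun k _ => α + k)
        · intro i hi
          have h1' := Finset.mem_Ioc.mp (Finset.mem_filter.mp hi).1
          have h2' := (Finset.mem_filter.mp hi).2
          rw [hFhigh i h1'.1 h1'.2] at h2'
          exact Finset.mem_filter.mpr ⟨Finset.mem_Icc.mpr ⟨by omega, by omega⟩, h2'⟩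
        · intro k hk
          have h1' := Finset.mem_Icc.mp (Finset.mem_filter.mp hk).1
          have h2' := (Finset.mem_filter.mp hk).2
          refine Finset.mem_filter.mpr ⟨Finset.mem_Ioc.mpr ⟨by omega, by omega⟩, ?_⟩
          rw [hFhigh (α + k) (by omega) (by omega)]
          simpa using h2'
        · intro i hi
          have h1' := Finset.mem_Ioc.mp (Finset.mem_filter.mp hi).1
          omega
        · intro k _
          omega
      rw [h2, tailF_count hj'.1 hj'.2]
      have := hmle j
      omega
  -- MapsTo G Pset Nset
  have hPlt : ∀ w ∈ Pset, α < n * m := by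
    intro w hw
    obtain ⟨_, hwDes, _⟩ := hw
    have hmem : α ∈ Des (n * m) w := by rw [hwDes]; exact Finset.mem_coe.mpr hαI
    exact hmem.2.1
  have hmapsG : ∀ w ∈ Pset, G w ∈ Nset := by
    intro w hw
    have hαnm := hPlt w hw
    obtain ⟨⟨hwr, hwz⟩, hwDes, hwm⟩ := hw
    have hGlow : ∀ i, 1 ≤ i → i ≤ α → G w i = w i := by
      intro i h1 h2
      simp only [hGdef]
      rw [if_pos (Finset.mem_Icc.mpr ⟨h1, h2⟩)]
    refine ⟨⟨?_, ?_⟩, ?_, ?_⟩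
    · intro i hi
      have hi' := Finset.mem_Icc.mp hi
      rw [hGlow i hi'.1 hi'.2]
      exact hwr i (Finset.mem_Icc.mpr ⟨hi'.1, by omega⟩)
    · intro i hi
      simp only [hGdef]
      rw [if_neg hi]
    · apply Set.ext
      intro i
      constructor
      · rintro ⟨hi1, hiα, hdesc⟩
        rw [hGlow i hi1 (by omega), hGlow (i + 1) (by omega) (by omega)] at hdesc
        have hmem : i ∈ Des (n * m) w := ⟨hi1, by omega, hdesc⟩
        rw [hwDes] at hmem
        exact Finset.mem_coe.mpr (Finset.mem_erase.mpr ⟨by omega, Finset.mem_coe.mp hmem⟩)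
      · intro hiD
        have hiD' : i ∈ D := Finset.mem_coe.mp hiD
        have h1 := hDmem i hiD'
        have hmem : i ∈ Des (n * m) w := by
          rw [hwDes]
          exact Finset.mem_coe.mpr (Finset.mem_of_mem_erase hiD')
        refine ⟨h1.1, h1.2, ?_⟩
        rw [hGlow i h1.1 (by omega), hGlow (i + 1) (by omega) (by omega)]
        exact hmem.2.2
    · rw [hGlow α hα1 (le_refl α)]
      have hαdes : α ∈ Des (n * m) w := by rw [hwDes]; exact Finset.mem_coe.mpr hαI
      have hwα1 : 1 ≤ w (α + 1) := by
        have := hwr (α + 1) (Finset.mem_Icc.mpr ⟨by omega, by omega⟩)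
        exact (Finset.mem_Icc.mp this).1
      have := hαdes.2.2
      omega
  -- G ∘ F = id on Nset
  have hGF : ∀ v ∈ Nset, G (F v) = v := by
    intro v hv
    have hαnm := hNlt v hv
    obtain ⟨⟨hvr, hvz⟩, _, _⟩ := hv
    funext i
    by_cases hi : i ∈ Finset.Icc 1 α
    · have hi' := Finset.mem_Icc.mp hi
      simp only [hGdef, hFdef]
      rw [if_pos hi, if_pos (Finset.mem_Icc.mpr ⟨hi'.1, by omega⟩), if_pos hi'.2]
    · simp only [hGdef]
      rw [if_neg hi]
      exact (hvz i hi).symm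
  -- F ∘ G = id on Pset
  have hFG : ∀ w ∈ Pset, F (G w) = w := by
    intro w hw
    have hαnm := hPlt w hw
    obtain ⟨⟨hwr, hwz⟩, hwDes, hwm⟩ := hw
    have hGlow : ∀ i, 1 ≤ i → i ≤ α → G w i = w i := by
      intro i h1 h2
      simp only [hGdef]
      rw [if_pos (Finset.mem_Icc.mpr ⟨h1, h2⟩)]
    have hmultG : ∀ j, mult α (G w) j = mult α w j := by
      intro j
      unfold mult
      congr 1
      apply Finset.filter_congr
      intro i hi
      have hi' := Finset.mem_Icc.mp hi
      rw [hGlow i hi'.1 hi'.2]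
    have htailSG : ∀ j, tailS α m (G w) j = tailS α m w j := by
      intro j
      unfold tailS
      exact Finset.sum_congr rfl (fun l _ => by rw [hmultG l])
    have htailFG : ∀ k, tailF α m n (G w) k = tailF α m n w k := by
      intro k
      unfold tailF
      simp only [htailSG]
    have hwrα : ∀ i ∈ Finset.Icc 1 α, w i ∈ Finset.Icc 1 n := by
      intro i hi
      have hi' := Finset.mem_Icc.mp hi
      exact hwr i (Finset.mem_Icc.mpr ⟨hi'.1, by omega⟩)
    have hsum : ∑ j ∈ Finset.Icc 1 n, mult α w j = α := sum_mult hwrα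
    have hmle : ∀ j ∈ Finset.Icc 1 n, mult α w j ≤ m := by
      intro j hj
      have hsubm : ((Finset.Icc 1 α).filter (fun i => w i = j))
          ⊆ ((Finset.Icc 1 (n * m)).filter (fun i => w i = j)) :=
        Finset.filter_subset_filter _ (Finset.Icc_subset_Icc_right (by omega))
      have hc := Finset.card_le_card hsubm
      have hmj := hwm j hj
      unfold mult at hmj ⊢
      omega
    have hL : α + tailS α m w n = n * m := by
      have hadd : ∑ j ∈ Finset.Icc 1 n, (mult α w j + (m - mult α w j))
          = ∑ _j ∈ Finset.Icc 1 n, m :=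
        Finset.sum_congr rfl (fun j hj => by have := hmle j hj; omega)
      rw [Finset.sum_add_distrib, hsum] at hadd
      have hadd' : α + ∑ j ∈ Finset.Icc 1 n, (m - mult α w j) = ∑ _j ∈ Finset.Icc 1 n, m :=
        hadd
      have hconst : ∑ _j ∈ Finset.Icc 1 n, m = n * m := by
        rw [Finset.sum_const, Nat.card_Icc]
        simp [Nat.smul_one_eq_cast]
      unfold tailS
      omega
    have hnd : ∀ i, α < i → i + 1 ≤ n * m → w i ≤ w (i + 1) := by
      intro i h1 h2
      by_contra hc
      push_neg at hc
      have hmem : i ∈ Des (n * m) w := ⟨by omega, by omega, hc⟩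
      rw [hwDes] at hmem
      have := hle i (Finset.mem_coe.mp hmem)
      omega
    have hmono : ∀ a b : ℕ, 1 ≤ a → a ≤ b → b ≤ tailS α m w n → w (α + a) ≤ w (α + b) := by
      intro a b ha
      induction b with
      | zero => intro h1 h2; omega
      | succ b ih =>
        intro hab hbL
        rcases Nat.lt_or_ge a (b + 1) with h | h
        · have step : w (α + b) ≤ w (α + (b + 1)) := by
            have hstep := hnd (α + b) (by omega) (by omega)
            rw [show α + (b + 1) = α + b + 1 by omega]
            exact hstep
          exact le_trans (ih (by omega) (by omega)) step
        · have : a = b + 1 := by omega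
          rw [this]
    have hcount : ∀ j, 1 ≤ j → j ≤ n →
        ((Finset.Icc 1 (tailS α m w n)).filter (fun k => w (α + k) = j)).card
          = m - mult α w j := by
      intro j h1 h2
      have hsplit : Finset.Icc 1 (n * m) = Finset.Icc 1 α ∪ Finset.Ioc α (n * m) := by
        ext x
        simp only [Finset.mem_Icc, Finset.mem_union, Finset.mem_Ioc]
        omega
      have hdisj : Disjoint ((Finset.Icc 1 α).filter (fun i => w i = j))
          ((Finset.Ioc α (n * m)).filter (fun i => w i = j)) := by
        rw [Finset.disjoint_left]
        intro x hx1 hx2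
        have hx1' := (Finset.mem_Icc.mp (Finset.mem_filter.mp hx1).1).2
        have hx2' := (Finset.mem_Ioc.mp (Finset.mem_filter.mp hx2).1).1
        omega
      have htot := hwm j (Finset.mem_Icc.mpr ⟨h1, h2⟩)
      unfold mult at htot
      rw [hsplit, Finset.filter_union, Finset.card_union_of_disjoint hdisj] at htot
      have hIoc : ((Finset.Ioc α (n * m)).filter (fun i => w i = j)).card
          = m - mult α w j := by
        unfold mult
        omega
      rw [← hIoc]
      apply Finset.card_bij' (fun k _ => α + k) (fun i _ => i - α)
      · intro k hk
        have hk1 := Finset.mem_Icc.mp (Finset.mem_filter.mp hk).1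
        have hk2 := (Finset.mem_filter.mp hk).2
        exact Finset.mem_filter.mpr ⟨Finset.mem_Ioc.mpr ⟨by omega, by omega⟩, hk2⟩
      · intro i hi
        have hi1 := Finset.mem_Ioc.mp (Finset.mem_filter.mp hi).1
        have hi2 := (Finset.mem_filter.mp hi).2
        refine Finset.mem_filter.mpr ⟨Finset.mem_Icc.mpr ⟨by omega, by omega⟩, ?_⟩
        rw [show α + (i - α) = i by omega]
        exact hi2
      · intro k _
        omega
      · intro i hi
        have hi1 := Finset.mem_Ioc.mp (Finset.mem_filter.mp hi).1
        omega
    have htail : ∀ k, 1 ≤ k → k ≤ tailS α m w n → w (α + k) = tailF α m n w k := by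
      intro k hk1 hkL
      have hkmem : k ∈ Finset.Icc 1 (tailS α m w n) := Finset.mem_Icc.mpr ⟨hk1, hkL⟩
      have hpos : ∀ k' ∈ Finset.Icc 1 (tailS α m w n), 1 ≤ w (α + k') := by
        intro k' hk'
        have hk'' := Finset.mem_Icc.mp hk'
        have := hwr (α + k') (Finset.mem_Icc.mpr ⟨by omega, by omega⟩)
        exact (Finset.mem_Icc.mp this).1
      have hgle : ∀ j, j ≤ n → (w (α + k) ≤ j ↔ k ≤ tailS α m w j) := by
        intro j hj
        have h1 := le_iff_mono (g := fun k' => w (α + k')) hmono j hkmem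
        have h2 : ((Finset.Icc 1 (tailS α m w n)).filter (fun i => w (α + i) ≤ j)).card
            = tailS α m w j := by
          rw [count_le_eq_sum (g := fun k' => w (α + k')) hpos]
          unfold tailS
          apply Finset.sum_congr rfl
          intro l hl
          have hl' := Finset.mem_Icc.mp hl
          exact hcount l hl'.1 (le_trans hl'.2 hj)
        rw [h2] at h1
        exact h1
      have hwk := Finset.mem_Icc.mp (hwr (α + k) (Finset.mem_Icc.mpr ⟨by omega, by omega⟩))
      have hfkn : tailF α m n w k ≤ n :=
        (tailF_le_iff (le_refl n) hk1).mpr hkL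
      have hA : w (α + k) ≤ tailF α m n w k :=
        (hgle _ hfkn).mpr ((tailF_le_iff hfkn hk1).mp (le_refl _))
      have hB : tailF α m n w k ≤ w (α + k) :=
        (tailF_le_iff hwk.2 hk1).mpr ((hgle _ hwk.2).mp (le_refl _))
      omega
    funext i
    by_cases hinm : i ∈ Finset.Icc 1 (n * m)
    · have hi' := Finset.mem_Icc.mp hinm
      by_cases hiα : i ≤ α
      · simp only [hFdef]
        rw [if_pos hinm, if_pos hiα]
        exact hGlow i hi'.1 hiα
      · push_neg at hiα
        simp only [hFdef]
        rw [if_pos hinm, if_neg (by omega)]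
        rw [htailFG]
        rw [← htail (i - α) (by omega) (by omega)]
        congr 1
        omega
    · simp only [hFdef]
      rw [if_neg hinm]
      exact (hwz i hinm).symm
  -- conclude
  have hinv : Set.InvOn G F Nset Pset := ⟨fun v hv => hGF v hv, fun w hw => hFG w hw⟩
  have hbij : Set.BijOn F Nset Pset :=
    hinv.bijOn (fun v hv => hmapsF v hv) (fun w hw => hmapsG w hw)
  have h1 : dP m I n = Pset.ncard := rfl
  have h2 : Ncount I n = Nset.ncard := rfl
  rw [h1, h2, ← hbij.image_eq, Set.ncard_image_of_injOn hbij.injOn]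

/-- for every positive integer `n`, and all `m, m' ≥ α_t - t + 1`,
`𝔡^m(I,n) = 𝔡^{m'}(I,n)`. -/
theorem stmt_1 (I : Finset ℕ) (hI : I.Nonempty) (hIpos : ∀ x ∈ I, 1 ≤ x)
    (n : ℕ) (hn : 1 ≤ n) (m m' : ℕ)
    (hm : I.sup id - I.card + 1 ≤ m) (hm' : I.sup id - I.card + 1 ≤ m') :
    dP m I n = dP m' I n := by
  rw [key I hI hIpos n hn m hm, key I hI hIpos n hn m' hm']
end

section
/- Suppose α_t − t ≥ 1 and n is an integer with n ≥ L + 1. Then 𝔡^{α_t − t}(I,n) < 𝔡^{α_t − t + 1}(I,n); in other words, the stabilization point of the function m ↦ 𝔡^m(I,n) is exactly α_t − t + 1. -/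
open Finset

namespace Stmt3Aux


/-- partial sums of `c` over `[1,j]` -/
def P (c : ℕ → ℕ) (j : ℕ) : ℕ := ∑ k ∈ Finset.Icc 1 j, c k

/-- canonical sorted arrangement: the `q`-th value (1-indexed) of the multiset with
multiplicities `c`. -/
noncomputable def tl (c : ℕ → ℕ) (q : ℕ) : ℕ := sInf {j | q ≤ P c j}

lemma P_mono (c : ℕ → ℕ) : Monotone (P c) := fun j j' h =>
  Finset.sum_le_sum_of_subset (Finset.Icc_subset_Icc_right h)

lemma P_stab (c : ℕ → ℕ) (n : ℕ) (hc : ∀ k, k ∉ Finset.Icc 1 n → c k = 0)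
    {j : ℕ} (hj : n ≤ j) : P c j = P c n := by
  refine (Finset.sum_subset (Finset.Icc_subset_Icc_right hj) ?_).symm
  intro x hx hnx
  refine hc x ?_
  simp only [Finset.mem_Icc] at hx hnx ⊢
  omega

lemma tl_le_iff (c : ℕ → ℕ) (n : ℕ) (hc : ∀ k, k ∉ Finset.Icc 1 n → c k = 0)
    {q j : ℕ} (hq : q ≤ P c n) : tl c q ≤ j ↔ q ≤ P c j := by
  constructor
  · intro h
    have hne : {j | q ≤ P c j}.Nonempty := ⟨n, hq⟩
    have := Nat.sInf_mem hne
    exact le_trans this (P_mono c h)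
  · intro h
    exact Nat.sInf_le h

lemma tl_pos (c : ℕ → ℕ) {q : ℕ} (hq : 1 ≤ q) (n : ℕ)
    (hc : ∀ k, k ∉ Finset.Icc 1 n → c k = 0) (hqT : q ≤ P c n) : 1 ≤ tl c q := by
  have hmem := Nat.sInf_mem (⟨n, hqT⟩ : {j | q ≤ P c j}.Nonempty)
  by_contra h
  push_neg at h
  have htl : tl c q = 0 := by omega
  rw [show sInf {j | q ≤ P c j} = tl c q from rfl, htl] at hmem
  simp only [Set.mem_setOf_eq, P] at hmem
  rw [show Finset.Icc 1 0 = ∅ from rfl, Finset.sum_empty] at hmem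
  omega

lemma tl_le_n (c : ℕ → ℕ) (n : ℕ) (hc : ∀ k, k ∉ Finset.Icc 1 n → c k = 0)
    {q : ℕ} (hqT : q ≤ P c n) : tl c q ≤ n :=
  (tl_le_iff c n hc hqT).2 hqT

lemma tl_mono (c : ℕ → ℕ) (n : ℕ) (hc : ∀ k, k ∉ Finset.Icc 1 n → c k = 0)
    {q q' : ℕ} (h : q ≤ q') (hq'T : q' ≤ P c n) : tl c q ≤ tl c q' := by
  rw [tl_le_iff c n hc (le_trans h hq'T)]
  have := Nat.sInf_mem (⟨n, hq'T⟩ : {j | q' ≤ P c j}.Nonempty)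
  exact le_trans h this

lemma count_le (c : ℕ → ℕ) (n : ℕ) (hc : ∀ k, k ∉ Finset.Icc 1 n → c k = 0)
    {j : ℕ} (hj : j ≤ n) :
    ((Finset.Icc 1 (P c n)).filter fun q => tl c q ≤ j).card = P c j := by
  have hPj : P c j ≤ P c n := P_mono c hj
  have : ((Finset.Icc 1 (P c n)).filter fun q => tl c q ≤ j) = Finset.Icc 1 (P c j) := by
    ext q
    simp only [Finset.mem_filter, Finset.mem_Icc]
    constructor
    · rintro ⟨⟨h1, h2⟩, h3⟩
      exact ⟨h1, (tl_le_iff c n hc h2).1 h3⟩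
    · rintro ⟨h1, h2⟩
      exact ⟨⟨h1, le_trans h2 hPj⟩, (tl_le_iff c n hc (le_trans h2 hPj)).2 h2⟩
  rw [this, Nat.card_Icc]
  omega

lemma count_eq (c : ℕ → ℕ) (n : ℕ) (hc : ∀ k, k ∉ Finset.Icc 1 n → c k = 0)
    {j : ℕ} (hj : 1 ≤ j) :
    ((Finset.Icc 1 (P c n)).filter fun q => tl c q = j).card = c j := by
  by_cases hjn : j ≤ n
  · have hsplit : ((Finset.Icc 1 (P c n)).filter fun q => tl c q ≤ j)
        = ((Finset.Icc 1 (P c n)).filter fun q => tl c q ≤ j - 1)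
          ∪ ((Finset.Icc 1 (P c n)).filter fun q => tl c q = j) := by
      rw [← Finset.filter_or]
      apply Finset.filter_congr
      intro q _
      constructor
      · intro h; omega
      · intro h; omega
    have hdisj : Disjoint ((Finset.Icc 1 (P c n)).filter fun q => tl c q ≤ j - 1)
        ((Finset.Icc 1 (P c n)).filter fun q => tl c q = j) := by
      apply Finset.disjoint_filter_filter'
      rw [disjoint_iff_inf_le]
      intro q hq
      simp only [Pi.inf_apply] at hq
      rcases hq with ⟨h1, h2⟩
      omega
    have h1 := count_le c n hc hjn
    have h2 := count_le c n hc (le_trans (Nat.sub_le j 1) hjn)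
    rw [hsplit, Finset.card_union_of_disjoint hdisj, h2] at h1
    have hstep : P c j = P c (j - 1) + c j := by
      have : j = (j - 1) + 1 := by omega
      rw [this, P, Finset.sum_Icc_succ_top (by omega), ← this]
      rfl
    omega
  · rw [hc j (by simp only [Finset.mem_Icc]; omega)]
    rw [Finset.card_eq_zero, Finset.filter_eq_empty_iff]
    intro q hq
    simp only [Finset.mem_Icc] at hq
    have := tl_le_n c n hc hq.2
    omega



lemma chain_mono (u : ℕ → ℕ) (a T : ℕ)
    (hmono : ∀ i, a + 1 ≤ i → i + 1 ≤ a + T → u i ≤ u (i + 1)) :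
    ∀ q q', 1 ≤ q → q ≤ q' → q' ≤ T → u (a + q) ≤ u (a + q') := by
  intro q q' hq hqq' hq'T
  revert hq'T
  induction q', hqq' using Nat.le_induction with
  | base => intro _; exact le_rfl
  | succ q' hqq' ih =>
    intro hq'T
    have h1 : u (a + q) ≤ u (a + q') := ih (by omega)
    have h2 : u (a + q') ≤ u (a + q' + 1) := hmono (a + q') (by omega) (by omega)
    calc u (a + q) ≤ u (a + q') := h1
      _ ≤ u (a + (q' + 1)) := by rw [show a + (q' + 1) = a + q' + 1 by omega]; exact h2

/-- a monotone positive sequence equals the canonical sorted arrangement of its counts -/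
lemma eq_tl_of_monotone (u : ℕ → ℕ) (a T : ℕ)
    (hmono : ∀ i, a + 1 ≤ i → i + 1 ≤ a + T → u i ≤ u (i + 1))
    (hpos : ∀ q, 1 ≤ q → q ≤ T → 1 ≤ u (a + q))
    (c : ℕ → ℕ)
    (hcEq : ∀ j, c j = ((Finset.Icc 1 T).filter fun q => u (a + q) = j).card)
    {q : ℕ} (hq1 : 1 ≤ q) (hqT : q ≤ T) : u (a + q) = tl c q := by
  have hPcard : ∀ j, P c j = ((Finset.Icc 1 T).filter fun q => u (a + q) ≤ j).card := by
    intro j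
    have hfib : ((Finset.Icc 1 T).filter fun q => u (a + q) ≤ j).card
        = ∑ k ∈ Finset.Icc 1 j,
            (((Finset.Icc 1 T).filter fun q => u (a + q) ≤ j).filter
              fun q => u (a + q) = k).card := by
      apply Finset.card_eq_sum_card_fiberwise
      intro x hx
      simp only [Finset.mem_coe, Finset.mem_filter, Finset.mem_Icc] at hx ⊢
      exact ⟨hpos x hx.1.1 hx.1.2, hx.2⟩
    have hff : ∀ k ∈ Finset.Icc 1 j,
        (((Finset.Icc 1 T).filter fun q => u (a + q) ≤ j).filter fun q => u (a + q) = k)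
          = ((Finset.Icc 1 T).filter fun q => u (a + q) = k) := by
      intro k hk
      simp only [Finset.mem_Icc] at hk
      rw [Finset.filter_filter]
      apply Finset.filter_congr
      intro x _
      constructor
      · rintro ⟨_, h⟩; exact h
      · intro h; exact ⟨by omega, h⟩
    rw [P, hfib]
    apply Finset.sum_congr rfl
    intro k hk
    rw [hcEq k, hff k hk]
  -- membership: q ≤ P c (u (a+q))
  have hmem : q ≤ P c (u (a + q)) := by
    rw [hPcard]
    have hsub : Finset.Icc 1 q ⊆ (Finset.Icc 1 T).filter fun q' => u (a + q') ≤ u (a + q) := by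
      intro x hx
      simp only [Finset.mem_Icc] at hx
      simp only [Finset.mem_filter, Finset.mem_Icc]
      exact ⟨⟨hx.1, le_trans hx.2 hqT⟩, chain_mono u a T hmono x q hx.1 hx.2 hqT⟩
    calc q = (Finset.Icc 1 q).card := by rw [Nat.card_Icc]; omega
      _ ≤ _ := Finset.card_le_card hsub
  apply le_antisymm
  · -- u (a+q) ≤ sInf
    show u (a + q) ≤ sInf {j | q ≤ P c j}
    have hne : Set.Nonempty {j | q ≤ P c j} := ⟨u (a + q), hmem⟩
    have hj : q ≤ P c (sInf {j | q ≤ P c j}) := Nat.sInf_mem hne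
    set j := sInf {j | q ≤ P c j} with hjdef
    by_contra hlt
    push_neg at hlt
    rw [hPcard] at hj
    have hsub : ((Finset.Icc 1 T).filter fun q' => u (a + q') ≤ j) ⊆ Finset.Icc 1 (q - 1) := by
      intro d hd
      simp only [Finset.mem_filter, Finset.mem_Icc] at hd
      simp only [Finset.mem_Icc]
      refine ⟨hd.1.1, ?_⟩
      by_contra hdq
      push_neg at hdq
      have : u (a + q) ≤ u (a + d) := chain_mono u a T hmono q d hq1 (by omega) hd.1.2
      omega
    have := Finset.card_le_card hsub
    rw [Nat.card_Icc] at this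
    omega
  · exact Nat.sInf_le hmem



lemma card_shift (a T : ℕ) (p : ℕ → Prop) [DecidablePred p] :
    ((Finset.Ioc a (a + T)).filter p).card = ((Finset.Icc 1 T).filter fun q => p (a + q)).card := by
  apply Finset.card_bij' (fun i _ => i - a) (fun q _ => a + q)
  · intro i hi
    simp only [Finset.mem_filter, Finset.mem_Ioc] at hi
    simp only [Finset.mem_filter, Finset.mem_Icc]
    refine ⟨⟨by omega, by omega⟩, ?_⟩
    rw [show a + (i - a) = i by omega]
    exact hi.2
  · intro q hq
    simp only [Finset.mem_filter, Finset.mem_Icc] at hq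
    simp only [Finset.mem_filter, Finset.mem_Ioc]
    exact ⟨⟨by omega, by omega⟩, hq.2⟩
  · intro i hi
    simp only [Finset.mem_filter, Finset.mem_Ioc] at hi
    omega
  · intro q hq
    simp only [Finset.mem_filter, Finset.mem_Icc] at hq
    omega

lemma mult_split (a T : ℕ) (v : ℕ → ℕ) (j : ℕ) :
    mult (a + T) v j = mult a v j + ((Finset.Icc 1 T).filter fun q => v (a + q) = j).card := by
  unfold mult
  rw [← card_shift a T (fun i => v i = j)]
  rw [← Finset.card_union_of_disjoint]
  · congr 1
    ext i
    simp only [Finset.mem_union, Finset.mem_filter, Finset.mem_Icc, Finset.mem_Ioc]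
    constructor
    · rintro ⟨⟨h1, h2⟩, h3⟩
      by_cases h : i ≤ a
      · exact Or.inl ⟨⟨h1, h⟩, h3⟩
      · exact Or.inr ⟨⟨by omega, h2⟩, h3⟩
    · rintro (⟨⟨h1, h2⟩, h3⟩ | ⟨⟨h1, h2⟩, h3⟩)
      · exact ⟨⟨h1, by omega⟩, h3⟩
      · exact ⟨⟨by omega, h2⟩, h3⟩
  · rw [Finset.disjoint_left]
    intro i hi hi2
    simp only [Finset.mem_filter, Finset.mem_Icc, Finset.mem_Ioc] at hi hi2
    omega

lemma mult_sum {a n : ℕ} {v : ℕ → ℕ} (hv : v ∈ Seqs a n) :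
    ∑ j ∈ Finset.Icc 1 n, mult a v j = a := by
  have := Finset.card_eq_sum_card_fiberwise (f := v) (s := Finset.Icc 1 a) (t := Finset.Icc 1 n)
    (fun x hx => hv.1 x hx)
  rw [Nat.card_Icc] at this
  unfold mult
  omega

lemma mult_eq_zero_of_notmem {a n : ℕ} {v : ℕ → ℕ} (hv : v ∈ Seqs a n) {j : ℕ}
    (hj : j ∉ Finset.Icc 1 n) : mult a v j = 0 := by
  rw [mult, Finset.card_eq_zero, Finset.filter_eq_empty_iff]
  intro i hi hij
  exact hj (hij ▸ hv.1 i hi)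

lemma mult_le_of_le {a b : ℕ} (hab : a ≤ b) (v w : ℕ → ℕ)
    (hvw : ∀ i, 1 ≤ i → i ≤ a → v i = w i) (j : ℕ) : mult a v j ≤ mult b w j := by
  apply Finset.card_le_card_of_injOn id
  · intro i hi
    simp only [Finset.mem_coe, Finset.mem_filter, Finset.mem_Icc] at hi ⊢
    simp only [id_eq]
    exact ⟨⟨hi.1.1, by omega⟩, by rw [← hvw i hi.1.1 hi.1.2]; exact hi.2⟩
  · exact Function.injective_id.injOn

lemma seqs_finite (ℓ n : ℕ) : (Seqs ℓ n).Finite := by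
  classical
  set F : (ℕ → ℕ) → (Fin (ℓ + 1) → Fin (n + 1)) :=
    fun v i => if h : v i.val ≤ n then (⟨v i.val, by omega⟩ : Fin (n + 1)) else 0 with hF
  have hval : ∀ v ∈ Seqs ℓ n, ∀ i : Fin (ℓ + 1), (F v i).val = v i.val := by
    intro v hv i
    have hle : v i.val ≤ n := by
      by_cases hi : (i : ℕ) ∈ Finset.Icc 1 ℓ
      · have := hv.1 i hi
        simp only [Finset.mem_Icc] at this
        omega
      · rw [hv.2 i hi]; omega
    simp only [hF, dif_pos hle]
  have hinj : Set.InjOn F (Seqs ℓ n) := by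
    intro v hv w hw h
    funext i
    by_cases hi : i ∈ Finset.Icc 1 ℓ
    · have hil : i < ℓ + 1 := by simp only [Finset.mem_Icc] at hi; omega
      have h1 := hval v hv ⟨i, hil⟩
      have h2 := hval w hw ⟨i, hil⟩
      have := congrFun h ⟨i, hil⟩
      rw [this] at h1
      rw [← h1, h2]
    · rw [hv.2 i hi, hw.2 i hi]
  apply Set.Finite.of_finite_image ?_ hinj
  exact Set.Finite.subset (Set.finite_univ) (Set.subset_univ _)


end Stmt3Aux
namespace Stmt3Aux

noncomputable def cfun (a n m : ℕ) (v : ℕ → ℕ) : ℕ → ℕ :=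
  fun j => if j ∈ Finset.Icc 1 n then m - mult a v j else 0

noncomputable def extF (a n m : ℕ) (v : ℕ → ℕ) : ℕ → ℕ :=
  fun i => if i ≤ a then v i else if i ≤ n * m then tl (cfun a n m v) (i - a) else 0

def res (a : ℕ) (w : ℕ → ℕ) : ℕ → ℕ := fun i => if i ≤ a then w i else 0

def Sdef (m a : ℕ) (v : ℕ → ℕ) : Set ℕ := {j | 1 ≤ j ∧ mult a v j < m}

def Aset (m : ℕ) (I : Finset ℕ) (n : ℕ) : Set (ℕ → ℕ) :=
  {w ∈ Seqs (n * m) n |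
    Des (n * m) w = ↑I ∧ ∀ j ∈ Finset.Icc 1 n, mult (n * m) w j = m}

def Bset (m : ℕ) (I : Finset ℕ) (n : ℕ) : Set (ℕ → ℕ) :=
  {v ∈ Seqs (I.sup id) n | Des (I.sup id) v = ↑(I.erase (I.sup id)) ∧
    (∀ j, mult (I.sup id) v j ≤ m) ∧
    sInf (Sdef m (I.sup id) v) < v (I.sup id)}

lemma mult_congr (a : ℕ) (v w : ℕ → ℕ) (h : ∀ i, 1 ≤ i → i ≤ a → v i = w i) (j : ℕ) :
    mult a v j = mult a w j :=
  le_antisymm (mult_le_of_le le_rfl v w h j)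
    (mult_le_of_le le_rfl w v (fun i h1 h2 => (h i h1 h2).symm) j)

lemma sup_mem_self {I : Finset ℕ} (hI : I.Nonempty) : I.sup id ∈ I := by
  obtain ⟨b, hb, hbe⟩ := Finset.exists_mem_eq_sup I hI id
  rw [hbe]; exact hb

lemma le_sup_self {I : Finset ℕ} {x : ℕ} (hx : x ∈ I) : x ≤ I.sup id :=
  Finset.le_sup (f := id) hx

lemma mem_erase_sup_iff {I : Finset ℕ} {a i : ℕ} (ha : a = I.sup id) :
    i ∈ I.erase a ↔ i ∈ I ∧ i < a := by
  rw [Finset.mem_erase]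
  constructor
  · rintro ⟨h1, h2⟩
    exact ⟨h2, lt_of_le_of_ne (ha ▸ le_sup_self h2) h1⟩
  · rintro ⟨h1, h2⟩
    exact ⟨by omega, h1⟩

lemma cfun_supp (a n m : ℕ) (v : ℕ → ℕ) : ∀ k, k ∉ Finset.Icc 1 n → cfun a n m v k = 0 :=
  fun _ hk => if_neg hk

lemma P_cfun {n m a : ℕ} {v : ℕ → ℕ} (hv : v ∈ Seqs a n) (hmlt : ∀ j, mult a v j ≤ m)
    (hanm : a ≤ n * m) : P (cfun a n m v) n = n * m - a := by
  have h1 : ∀ k ∈ Finset.Icc 1 n, cfun a n m v k + mult a v k = m := by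
    intro k hk
    rw [cfun, if_pos hk]
    have := hmlt k
    omega
  have h2 : ∑ k ∈ Finset.Icc 1 n, (cfun a n m v k + mult a v k) = n * m := by
    rw [Finset.sum_congr rfl h1, Finset.sum_const, Nat.card_Icc, Nat.add_sub_cancel,
      smul_eq_mul]
  rw [Finset.sum_add_distrib, mult_sum hv] at h2
  unfold P
  omega

lemma exists_deficient {n m a : ℕ} {v : ℕ → ℕ} (hv : v ∈ Seqs a n) (hanm : a < n * m) :
    ∃ k ∈ Finset.Icc 1 n, mult a v k < m := by
  by_contra h
  push_neg at h
  have h2 : ∑ k ∈ Finset.Icc 1 n, m ≤ ∑ k ∈ Finset.Icc 1 n, mult a v k :=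
    Finset.sum_le_sum h
  rw [mult_sum hv, Finset.sum_const, Nat.card_Icc, Nat.add_sub_cancel, smul_eq_mul] at h2
  omega

lemma tl_one_le_sInf {n m a : ℕ} {v : ℕ → ℕ} (hv : v ∈ Seqs a n)
    (hmlt : ∀ j, mult a v j ≤ m) (hanm : a < n * m) (hm : 1 ≤ m) :
    tl (cfun a n m v) 1 ≤ sInf (Sdef m a v) := by
  have hSne : (Sdef m a v).Nonempty := by
    refine ⟨n + 1, by omega, ?_⟩
    rw [mult_eq_zero_of_notmem hv (by simp only [Finset.mem_Icc]; omega)]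
    omega
  have hs1 := Nat.sInf_mem hSne
  set s1 := sInf (Sdef m a v) with hs1def
  obtain ⟨hs1a, hs1b⟩ := hs1
  obtain ⟨k, hk, hkdef⟩ := exists_deficient hv hanm
  have hkn := (Finset.mem_Icc.1 hk)
  have hs1k : s1 ≤ k := Nat.sInf_le ⟨by omega, hkdef⟩
  have hs1n : s1 ≤ n := by omega
  apply Nat.sInf_le
  show 1 ≤ P (cfun a n m v) s1
  have hcs1 : 1 ≤ cfun a n m v s1 := by
    rw [cfun, if_pos (Finset.mem_Icc.2 ⟨hs1a, hs1n⟩)]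
    omega
  calc 1 ≤ cfun a n m v s1 := hcs1
    _ ≤ P (cfun a n m v) s1 :=
      Finset.single_le_sum (fun _ _ => Nat.zero_le _)
        (Finset.mem_Icc.2 ⟨hs1a, le_rfl⟩)

lemma ext_mem {I : Finset ℕ} (hI : I.Nonempty) (hIpos : ∀ x ∈ I, 1 ≤ x)
    {n m a : ℕ} {v : ℕ → ℕ} (ha : a = I.sup id)
    (hv : v ∈ Seqs a n)
    (hdes : Des a v = ↑(I.erase a))
    (hmlt : ∀ j, mult a v j ≤ m)
    (hinf : sInf (Sdef m a v) < v a)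
    (hanm : a < n * m) (hm : 1 ≤ m) :
    extF a n m v ∈ Aset m I n := by
  have haI : a ∈ I := ha ▸ sup_mem_self hI
  have ha1 : 1 ≤ a := hIpos a haI
  set c := cfun a n m v with hcdef
  have hPn : P c n = n * m - a := P_cfun hv hmlt (le_of_lt hanm)
  have hext_low : ∀ i, i ≤ a → extF a n m v i = v i := fun i hi => if_pos hi
  have hext_hi : ∀ i, a < i → i ≤ n * m → extF a n m v i = tl c (i - a) := by
    intro i h1 h2
    rw [extF, if_neg (by omega), if_pos h2]
  have htl_range : ∀ q, 1 ≤ q → q ≤ n * m - a → 1 ≤ tl c q ∧ tl c q ≤ n := by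
    intro q h1 h2
    have hq : q ≤ P c n := by omega
    exact ⟨tl_pos c h1 n (cfun_supp a n m v) hq, tl_le_n c n (cfun_supp a n m v) hq⟩
  have hseqs : extF a n m v ∈ Seqs (n * m) n := by
    constructor
    · intro i hi
      rw [Finset.mem_Icc] at hi
      by_cases hia : i ≤ a
      · rw [hext_low i hia]
        exact hv.1 i (Finset.mem_Icc.2 ⟨hi.1, hia⟩)
      · push_neg at hia
        rw [hext_hi i hia hi.2]
        have := htl_range (i - a) (by omega) (by omega)
        rw [Finset.mem_Icc]
        omega
    · intro i hi
      rw [Finset.mem_Icc] at hi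
      push_neg at hi
      by_cases hi0 : i = 0
      · subst hi0
        rw [hext_low 0 (by omega)]
        exact hv.2 0 (by simp)
      · have hinm : n * m < i := hi (by omega)
        rw [extF]
        rw [if_neg (by omega), if_neg (by omega)]
  refine ⟨hseqs, ?_, ?_⟩
  · -- descent set
    ext i
    simp only [Finset.mem_coe, Set.mem_setOf_eq]
    rcases lt_trichotomy i a with hia | hia | hia
    · have h1 : extF a n m v i = v i := hext_low i (by omega)
      have h2 : extF a n m v (i + 1) = v (i + 1) := hext_low (i + 1) (by omega)
      have hIiff : i ∈ I ↔ i ∈ I.erase a := by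
        rw [mem_erase_sup_iff ha]
        exact ⟨fun h => ⟨h, hia⟩, fun h => h.1⟩
      constructor
      · rintro ⟨hq1, hq2, hq3⟩
        rw [h1, h2] at hq3
        rw [hIiff, ← Finset.mem_coe, ← hdes]
        exact ⟨hq1, by omega, hq3⟩
      · intro hiI
        rw [hIiff, ← Finset.mem_coe, ← hdes] at hiI
        obtain ⟨hq1, hq2, hq3⟩ := hiI
        exact ⟨hq1, by omega, by rw [h1, h2]; exact hq3⟩
    · subst hia
      constructor
      · intro _; exact haI
      · intro _
        refine ⟨ha1, hanm, ?_⟩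
        rw [hext_low i le_rfl, hext_hi (i + 1) (by omega) (by omega),
          show i + 1 - i = 1 by omega]
        calc tl c 1 ≤ sInf (Sdef m i v) := tl_one_le_sInf hv hmlt hanm hm
          _ < v i := hinf
    · constructor
      · rintro ⟨hq1, hq2, hq3⟩
        exfalso
        rw [hext_hi i hia (by omega), hext_hi (i + 1) (by omega) (by omega)] at hq3
        have : tl c (i - a) ≤ tl c (i + 1 - a) :=
          tl_mono c n (cfun_supp a n m v) (by omega) (by omega)
        omega
      · intro hiI
        exfalso
        have : i ≤ a := ha ▸ le_sup_self hiI
        omega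
  · -- multiplicities
    intro j hj
    have hj1 : 1 ≤ j := (Finset.mem_Icc.1 hj).1
    have hsplit := mult_split a (n * m - a) (extF a n m v) j
    rw [show a + (n * m - a) = n * m by omega] at hsplit
    have hpre : mult a (extF a n m v) j = mult a v j :=
      mult_congr a _ v (fun i _ h2 => hext_low i h2) j
    have htail : ((Finset.Icc 1 (n * m - a)).filter fun q => extF a n m v (a + q) = j).card
        = c j := by
      rw [← count_eq c n (cfun_supp a n m v) hj1, hPn]
      congr 1
      apply Finset.filter_congr
      intro q hq
      rw [Finset.mem_Icc] at hq
      rw [hext_hi (a + q) (by omega) (by omega), show a + q - a = q by omega]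
    rw [hpre, htail, hcdef, cfun, if_pos hj] at hsplit
    have := hmlt j
    omega

end Stmt3Aux
namespace Stmt3Aux

lemma res_extF {n m a : ℕ} {v : ℕ → ℕ} (hv : v ∈ Seqs a n) :
    res a (extF a n m v) = v := by
  funext i
  show (if i ≤ a then extF a n m v i else 0) = v i
  by_cases hia : i ≤ a
  · rw [if_pos hia]
    exact if_pos hia
  · rw [if_neg hia]
    exact (hv.2 i (by rw [Finset.mem_Icc]; omega)).symm

lemma res_mem {I : Finset ℕ} (hI : I.Nonempty) (hIpos : ∀ x ∈ I, 1 ≤ x)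
    {n m a : ℕ} {w : ℕ → ℕ} (ha : a = I.sup id)
    (hw : w ∈ Aset m I n) :
    a < n * m ∧ res a w ∈ Bset m I n ∧ extF a n m (res a w) = w := by
  subst ha
  set a := I.sup id with ha
  obtain ⟨hwseq, hwdes, hwmlt⟩ := hw
  have haI : a ∈ I := sup_mem_self hI
  have ha1 : 1 ≤ a := hIpos a haI
  have haDes : a ∈ Des (n * m) w := by rw [hwdes]; exact haI
  obtain ⟨_, hanm, hdesc⟩ := haDes
  have hres_low : ∀ i, i ≤ a → res a w i = w i := fun i hi => if_pos hi
  have hres_hi : ∀ i, a < i → res a w i = 0 := fun i hi => if_neg (by omega)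
  set v := res a w with hvdef
  have hvseq : v ∈ Seqs a n := by
    constructor
    · intro i hi
      rw [Finset.mem_Icc] at hi
      rw [hres_low i hi.2]
      exact hwseq.1 i (Finset.mem_Icc.2 ⟨hi.1, by omega⟩)
    · intro i hi
      rw [Finset.mem_Icc] at hi
      by_cases hi0 : i = 0
      · subst hi0
        rw [hres_low 0 (by omega)]
        exact hwseq.2 0 (by simp)
      · exact hres_hi i (by omega)
  have hwm : ∀ i, 1 ≤ i → i ≤ a → v i = w i := fun i _ h2 => hres_low i h2
  have hmw : ∀ j, mult a v j = mult a w j := mult_congr a v w hwm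
  have hvmlt : ∀ j, mult a v j ≤ m := by
    intro j
    by_cases hj : j ∈ Finset.Icc 1 n
    · rw [← hwmlt j hj]
      exact mult_le_of_le (by omega) v w hwm j
    · rw [mult_eq_zero_of_notmem hvseq hj]
      exact Nat.zero_le m
  have hvdes : Des a v = ↑(I.erase a) := by
    ext i
    simp only [Finset.mem_coe, Set.mem_setOf_eq]
    rw [mem_erase_sup_iff ha]
    constructor
    · rintro ⟨h1, h2, h3⟩
      rw [hres_low i (by omega), hres_low (i + 1) (by omega)] at h3
      have : i ∈ Des (n * m) w := ⟨h1, by omega, h3⟩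
      rw [hwdes] at this
      exact ⟨this, h2⟩
    · rintro ⟨h1, h2⟩
      have : i ∈ Des (n * m) w := by rw [hwdes]; exact h1
      obtain ⟨hq1, _, hq3⟩ := this
      refine ⟨hq1, h2, ?_⟩
      rw [hres_low i (by omega), hres_low (i + 1) (by omega)]
      exact hq3
  have hj1mem : a + 1 ∈ Finset.Icc 1 (n * m) := Finset.mem_Icc.2 ⟨by omega, by omega⟩
  have hj1 : w (a + 1) ∈ Finset.Icc 1 n := hwseq.1 (a + 1) hj1mem
  have hj1lt : mult a v (w (a + 1)) < m := by
    rw [hmw]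
    rw [← hwmlt (w (a + 1)) hj1]
    unfold mult
    apply Finset.card_lt_card
    have hsub : ((Finset.Icc 1 a).filter fun i => w i = w (a + 1)) ⊆
        ((Finset.Icc 1 (n * m)).filter fun i => w i = w (a + 1)) := by
      intro i hi
      simp only [Finset.mem_filter, Finset.mem_Icc] at hi ⊢
      exact ⟨⟨hi.1.1, by omega⟩, hi.2⟩
    rw [Finset.ssubset_iff_of_subset hsub]
    refine ⟨a + 1, ?_, ?_⟩
    · simp only [Finset.mem_filter]
      exact ⟨hj1mem, trivial⟩
    · simp only [Finset.mem_filter, Finset.mem_Icc]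
      intro hcon
      omega
  have hinf : sInf (Sdef m a v) < v a := by
    have hle : sInf (Sdef m a v) ≤ w (a + 1) :=
      Nat.sInf_le ⟨(Finset.mem_Icc.1 hj1).1, hj1lt⟩
    rw [hres_low a le_rfl]
    omega
  refine ⟨hanm, ⟨hvseq, hvdes, hvmlt, hinf⟩, ?_⟩
  -- extF a n m v = w
  have hPn : P (cfun a n m v) n = n * m - a := P_cfun hvseq hvmlt (by omega)
  have hcEq : ∀ j, cfun a n m v j
      = ((Finset.Icc 1 (n * m - a)).filter fun q => w (a + q) = j).card := by
    intro j
    have hsplit := mult_split a (n * m - a) w j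
    rw [show a + (n * m - a) = n * m by omega] at hsplit
    by_cases hj : j ∈ Finset.Icc 1 n
    · rw [hwmlt j hj, ← hmw j] at hsplit
      rw [cfun, if_pos hj]
      have := hvmlt j
      omega
    · have h0 : mult (n * m) w j = 0 := mult_eq_zero_of_notmem hwseq hj
      rw [h0] at hsplit
      rw [cfun, if_neg hj]
      omega
  have hmono : ∀ i, a + 1 ≤ i → i + 1 ≤ a + (n * m - a) → w i ≤ w (i + 1) := by
    intro i h1 h2
    by_contra hcon
    push_neg at hcon
    have hiDes : i ∈ Des (n * m) w := ⟨by omega, by omega, hcon⟩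
    rw [hwdes] at hiDes
    have : i ≤ a := le_sup_self hiDes
    omega
  have hpos : ∀ q, 1 ≤ q → q ≤ n * m - a → 1 ≤ w (a + q) := by
    intro q h1 h2
    have := hwseq.1 (a + q) (Finset.mem_Icc.2 ⟨by omega, by omega⟩)
    exact (Finset.mem_Icc.1 this).1
  funext i
  by_cases hia : i ≤ a
  · rw [extF]
    simp only [if_pos hia]
    exact hres_low i hia
  · push_neg at hia
    by_cases hinm : i ≤ n * m
    · rw [extF]
      simp only [if_neg (by omega : ¬ i ≤ a), if_pos hinm]
      have := eq_tl_of_monotone w a (n * m - a) hmono hpos (cfun a n m v) hcEq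
        (q := i - a) (by omega) (by omega)
      rw [show a + (i - a) = i by omega] at this
      exact this.symm
    · rw [extF]
      simp only [if_neg (by omega : ¬ i ≤ a), if_neg hinm]
      exact (hwseq.2 i (by rw [Finset.mem_Icc]; omega)).symm

lemma Bset_finite (m : ℕ) (I : Finset ℕ) (n : ℕ) : (Bset m I n).Finite :=
  (seqs_finite (I.sup id) n).subset (fun _ hv => hv.1)

lemma dP_eq_Aset (m : ℕ) (I : Finset ℕ) (n : ℕ) : dP m I n = (Aset m I n).ncard := rfl

lemma res_injOn {I : Finset ℕ} (hI : I.Nonempty) (hIpos : ∀ x ∈ I, 1 ≤ x) {n m : ℕ} :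
    Set.InjOn (res (I.sup id)) (Aset m I n) := by
  intro w1 h1 w2 h2 he
  have e1 := (res_mem hI hIpos rfl h1).2.2
  have e2 := (res_mem hI hIpos rfl h2).2.2
  rw [← e1, ← e2, he]

lemma dP_le_B {I : Finset ℕ} (hI : I.Nonempty) (hIpos : ∀ x ∈ I, 1 ≤ x) {n m : ℕ} :
    dP m I n ≤ (Bset m I n).ncard := by
  rw [dP_eq_Aset]
  rw [← Set.ncard_image_of_injOn (res_injOn hI hIpos (n := n) (m := m))]
  apply Set.ncard_le_ncard ?_ (Bset_finite m I n)
  rintro v ⟨w, hw, rfl⟩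
  exact (res_mem hI hIpos rfl hw).2.1

lemma dP_eq_B {I : Finset ℕ} (hI : I.Nonempty) (hIpos : ∀ x ∈ I, 1 ≤ x) {n m : ℕ}
    (hm : 1 ≤ m) (hanm : I.sup id < n * m) :
    dP m I n = (Bset m I n).ncard := by
  rw [dP_eq_Aset]
  rw [← Set.ncard_image_of_injOn (res_injOn hI hIpos (n := n) (m := m))]
  congr 1
  apply Set.Subset.antisymm
  · rintro v ⟨w, hw, rfl⟩
    exact (res_mem hI hIpos rfl hw).2.1
  · intro v hv
    obtain ⟨hvseq, hvdes, hvmlt, hvinf⟩ := hv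
    exact ⟨extF (I.sup id) n m v, ext_mem hI hIpos rfl hvseq hvdes hvmlt hvinf hanm hm,
      res_extF hvseq⟩

lemma Bset_mono {I : Finset ℕ} {n m : ℕ} (hm : 1 ≤ m) :
    Bset m I n ⊆ Bset (m + 1) I n := by
  intro v hv
  obtain ⟨hvseq, hvdes, hvmlt, hvinf⟩ := hv
  refine ⟨hvseq, hvdes, fun j => le_trans (hvmlt j) (by omega), ?_⟩
  have hSne : (Sdef m (I.sup id) v).Nonempty := by
    refine ⟨n + 1, by omega, ?_⟩
    rw [mult_eq_zero_of_notmem hvseq (by simp only [Finset.mem_Icc]; omega)]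
    omega
  have hmem := Nat.sInf_mem hSne
  obtain ⟨h1, h2⟩ := hmem
  have : sInf (Sdef (m + 1) (I.sup id) v) ≤ sInf (Sdef m (I.sup id) v) :=
    Nat.sInf_le ⟨h1, by omega⟩
  omega

end Stmt3Aux
namespace Stmt3Aux

/-- `cI I p` = length of the run of consecutive integers of `I` starting at `p`. -/
def cI (I : Finset ℕ) (p : ℕ) : ℕ :=
  ((Finset.Icc p (I.sup id)).filter fun q => Finset.Icc p q ⊆ I).card

/-- the witness sequence -/
def wit (I : Finset ℕ) : ℕ → ℕ :=
  fun p => if p ∈ Finset.Icc 1 (I.sup id) then 1 + cI I p else 0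

lemma cI_eq_zero {I : Finset ℕ} {p : ℕ} (hp : p ∉ I) : cI I p = 0 := by
  rw [cI, Finset.card_eq_zero, Finset.filter_eq_empty_iff]
  intro q hq hsub
  rw [Finset.mem_Icc] at hq
  exact hp (hsub (Finset.mem_Icc.2 ⟨le_rfl, hq.1⟩))

lemma cI_succ {I : Finset ℕ} {p : ℕ} (hp : p ∈ I) : cI I p = cI I (p + 1) + 1 := by
  have hpa : p ≤ I.sup id := le_sup_self hp
  have hstep : ((Finset.Icc p (I.sup id)).filter fun q => Finset.Icc p q ⊆ I)
      = insert p ((Finset.Icc (p + 1) (I.sup id)).filter fun q => Finset.Icc (p + 1) q ⊆ I) := by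
    ext q
    simp only [Finset.mem_filter, Finset.mem_insert, Finset.mem_Icc]
    constructor
    · rintro ⟨⟨h1, h2⟩, h3⟩
      by_cases hq : q = p
      · exact Or.inl hq
      · refine Or.inr ⟨⟨by omega, h2⟩, fun x hx => h3 ?_⟩
        rw [Finset.mem_Icc] at hx ⊢
        omega
    · rintro (rfl | ⟨⟨h1, h2⟩, h3⟩)
      · refine ⟨⟨le_rfl, hpa⟩, fun x hx => ?_⟩
        rw [Finset.mem_Icc] at hx
        have : x = q := by omega
        rw [this]; exact hp
      · refine ⟨⟨by omega, h2⟩, fun x hx => ?_⟩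
        rw [Finset.mem_Icc] at hx
        by_cases hxp : x = p
        · rw [hxp]; exact hp
        · exact h3 (Finset.mem_Icc.2 ⟨by omega, hx.2⟩)
  rw [cI, hstep, Finset.card_insert_of_notMem, cI]
  simp only [Finset.mem_filter, Finset.mem_Icc]
  intro hcon
  omega

lemma cI_pos {I : Finset ℕ} {p : ℕ} (hp : p ∈ I) : 1 ≤ cI I p := by
  rw [cI_succ hp]; omega

lemma cI_pos_mem {I : Finset ℕ} {p : ℕ} (hp : 1 ≤ cI I p) : p ∈ I := by
  by_contra h
  rw [cI_eq_zero h] at hp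
  omega

lemma cI_le_longestRun {I : Finset ℕ} (p : ℕ) : cI I p ≤ longestRun I := by
  by_cases hp : p ∈ I
  · exact Finset.le_sup (f := fun a => ((Finset.Icc a (I.sup id)).filter
      fun b => Finset.Icc a b ⊆ I).card) hp
  · rw [cI_eq_zero hp]; exact Nat.zero_le _

lemma cI_chain {I : Finset ℕ} : ∀ k p, 1 ≤ k → cI I p = k →
    p + k ≤ I.sup id + 1 ∧ p + k ∉ I := by
  intro k
  induction k with
  | zero => intro p h; omega
  | succ k ih =>
    intro p _ hck
    have hpI : p ∈ I := cI_pos_mem (by omega)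
    have hstep : cI I (p + 1) = k := by
      have := cI_succ hpI
      omega
    by_cases hk : 1 ≤ k
    · have := ih (p + 1) hk hstep
      constructor
      · omega
      · rw [show p + (k + 1) = p + 1 + k by omega]
        exact this.2
    · have hk0 : k = 0 := by omega
      subst hk0
      have hp1 : p + 1 ∉ I := by
        intro hcon
        have := cI_pos hcon
        omega
      exact ⟨by have := le_sup_self hpI; omega, by simpa using hp1⟩

section Witness

variable {I : Finset ℕ} (hI : I.Nonempty) (hIpos : ∀ x ∈ I, 1 ≤ x)
lemma wit_low : ∀ p, 1 ≤ p → p ≤ I.sup id → wit I p = 1 + cI I p :=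
  fun p h1 h2 => if_pos (Finset.mem_Icc.2 ⟨h1, h2⟩)

include hIpos

lemma I_subset_Icc : I ⊆ Finset.Icc 1 (I.sup id) :=
  fun x hx => Finset.mem_Icc.2 ⟨hIpos x hx, le_sup_self hx⟩

lemma card_le_sup : I.card ≤ I.sup id := by
  have := Finset.card_le_card (I_subset_Icc hIpos)
  rw [Nat.card_Icc, Nat.add_sub_cancel] at this
  exact this

lemma wit_seqs {n : ℕ} (hn : longestRun I + 1 ≤ n) : wit I ∈ Seqs (I.sup id) n := by
  constructor
  · intro p hp
    rw [Finset.mem_Icc] at hp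
    rw [wit_low p hp.1 hp.2, Finset.mem_Icc]
    have := cI_le_longestRun (I := I) p
    omega
  · intro p hp
    exact if_neg hp

lemma wit_des : Des (I.sup id) (wit I) = ↑(I.erase (I.sup id)) := by
  ext i
  simp only [Finset.mem_coe, Set.mem_setOf_eq]
  rw [mem_erase_sup_iff rfl]
  constructor
  · rintro ⟨h1, h2, h3⟩
    refine ⟨?_, h2⟩
    by_contra hiI
    rw [wit_low i h1 (by omega), wit_low (i + 1) (by omega) (by omega), cI_eq_zero hiI] at h3
    omega
  · rintro ⟨h1, h2⟩
    refine ⟨hIpos i h1, h2, ?_⟩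
    rw [wit_low i (hIpos i h1) (by omega), wit_low (i + 1) (by omega) (by omega), cI_succ h1]
    omega

include hI in
lemma wit_sup : wit I (I.sup id) = 2 := by
  have haI : I.sup id ∈ I := sup_mem_self hI
  have ha1 : 1 ≤ I.sup id := hIpos _ haI
  rw [wit_low (I.sup id) ha1 le_rfl, cI_succ haI, cI_eq_zero]
  intro hcon
  have := le_sup_self hcon
  omega

lemma wit_mult_one : mult (I.sup id) (wit I) 1 = I.sup id - I.card := by
  have heq : ((Finset.Icc 1 (I.sup id)).filter fun p => wit I p = 1)
      = Finset.Icc 1 (I.sup id) \ I := by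
    ext p
    simp only [Finset.mem_filter, Finset.mem_sdiff]
    constructor
    · rintro ⟨h1, h2⟩
      refine ⟨h1, fun hpI => ?_⟩
      rw [Finset.mem_Icc] at h1
      rw [wit_low p h1.1 h1.2] at h2
      have := cI_pos hpI
      omega
    · rintro ⟨h1, h2⟩
      rw [Finset.mem_Icc] at h1
      exact ⟨Finset.mem_Icc.2 h1, by rw [wit_low p h1.1 h1.2, cI_eq_zero h2]⟩
  rw [mult, heq, Finset.card_sdiff_of_subset (I_subset_Icc hIpos), Nat.card_Icc, Nat.add_sub_cancel]

lemma wit_mult_ge_two {j : ℕ} (hj : 2 ≤ j) :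
    mult (I.sup id) (wit I) j ≤ (I.sup id - I.card) + 1 := by
  set a := I.sup id with ha
  have hcard : ((Finset.Icc 1 a \ I) ∪ {a + 1}).card ≤ (a - I.card) + 1 := by
    apply le_trans (Finset.card_union_le _ _)
    rw [Finset.card_sdiff_of_subset (I_subset_Icc hIpos), Nat.card_Icc, Nat.add_sub_cancel,
      Finset.card_singleton]
  refine le_trans (Finset.card_le_card_of_injOn (fun p => p + (j - 1)) ?_ ?_) hcard
  · intro p hp
    simp only [Finset.mem_coe, Finset.mem_filter, Finset.mem_Icc] at hp
    obtain ⟨⟨h1, h2⟩, h3⟩ := hp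
    rw [wit_low p h1 h2] at h3
    have hc : cI I p = j - 1 := by omega
    have := cI_chain (j - 1) p (by omega) hc
    simp only [Finset.mem_coe, Finset.mem_union, Finset.mem_sdiff, Finset.mem_Icc, Finset.mem_singleton]
    by_cases hcase : p + (j - 1) = a + 1
    · exact Or.inr hcase
    · exact Or.inl ⟨⟨by omega, by omega⟩, this.2⟩
  · intro x _ y _ hxy
    exact Nat.add_right_cancel hxy

include hI in
lemma wit_not_in_Bset {n : ℕ} (hn : longestRun I + 1 ≤ n) (hgap : 1 ≤ I.sup id - I.card) :
    wit I ∉ Bset (I.sup id - I.card) I n := by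
  rintro ⟨hseq, _, _, hinf⟩
  have hSne : (Sdef (I.sup id - I.card) (I.sup id) (wit I)).Nonempty := by
    refine ⟨n + 1, by omega, ?_⟩
    rw [mult_eq_zero_of_notmem (wit_seqs hIpos hn) (by simp only [Finset.mem_Icc]; omega)]
    omega
  have hmem := Nat.sInf_mem hSne
  obtain ⟨h1, h2⟩ := hmem
  rw [wit_sup hI hIpos] at hinf
  have hs1 : sInf (Sdef (I.sup id - I.card) (I.sup id) (wit I)) = 1 := by omega
  rw [hs1, wit_mult_one hIpos] at h2
  omega

include hI in
lemma wit_in_Bset {n : ℕ} (hn : longestRun I + 1 ≤ n) (hgap : 1 ≤ I.sup id - I.card) :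
    wit I ∈ Bset (I.sup id - I.card + 1) I n := by
  refine ⟨wit_seqs hIpos hn, wit_des hIpos, ?_, ?_⟩
  · intro j
    rcases Nat.lt_or_ge j 2 with hj | hj
    · rcases Nat.lt_or_ge j 1 with hj0 | hj1
      · have : j = 0 := by omega
        subst this
        rw [mult_eq_zero_of_notmem (wit_seqs hIpos hn) (by simp only [Finset.mem_Icc]; omega)]
        omega
      · have : j = 1 := by omega
        subst this
        rw [wit_mult_one hIpos]
        omega
    · exact le_trans (wit_mult_ge_two hIpos hj) le_rfl
  · have h1S : (1 : ℕ) ∈ Sdef (I.sup id - I.card + 1) (I.sup id) (wit I) := by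
      refine ⟨le_rfl, ?_⟩
      rw [wit_mult_one hIpos]
      omega
    have := Nat.sInf_le h1S
    rw [wit_sup hI hIpos]
    omega

lemma sup_lt_mul {n : ℕ} (hn : longestRun I + 1 ≤ n) :
    I.sup id < n * (I.sup id - I.card + 1) := by
  classical
  set a := I.sup id with ha
  set L := longestRun I with hL
  set m := a - I.card with hm
  -- each fiber of p ↦ p + cI I p on I has size ≤ L
  have hfiber : ∀ b ∈ I.image (fun p => p + cI I p),
      (I.filter fun p => p + cI I p = b).card ≤ L := by
    intro b hb
    simp only [Finset.mem_image] at hb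
    obtain ⟨p0, hp0I, hp0b⟩ := hb
    have hb2 : 2 ≤ b := by
      have := cI_pos hp0I
      have := hIpos p0 hp0I
      omega
    have hsub : (I.filter fun p => p + cI I p = b) ⊆ Finset.Icc (b - L) (b - 1) := by
      intro p hp
      simp only [Finset.mem_filter] at hp
      obtain ⟨hpI, hpb⟩ := hp
      have h1 := cI_pos hpI
      have h2 := cI_le_longestRun (I := I) p
      rw [Finset.mem_Icc]
      omega
    apply le_trans (Finset.card_le_card hsub)
    rw [Nat.card_Icc]
    omega
  have himg : I.image (fun p => p + cI I p) ⊆ (Finset.Icc 1 a \ I) ∪ {a + 1} := by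
    intro b hb
    simp only [Finset.mem_image] at hb
    obtain ⟨p, hpI, hpb⟩ := hb
    have h1 := cI_pos hpI
    have := cI_chain (cI I p) p h1 rfl
    have hp1 := hIpos p hpI
    simp only [Finset.mem_union, Finset.mem_sdiff, Finset.mem_Icc, Finset.mem_singleton]
    by_cases hcase : b = a + 1
    · exact Or.inr hcase
    · exact Or.inl ⟨⟨by omega, by omega⟩, by rw [← hpb]; exact this.2⟩
  have himgcard : (I.image (fun p => p + cI I p)).card ≤ m + 1 := by
    apply le_trans (Finset.card_le_card himg)
    apply le_trans (Finset.card_union_le _ _)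
    rw [Finset.card_sdiff_of_subset (I_subset_Icc hIpos), Nat.card_Icc, Nat.add_sub_cancel,
      Finset.card_singleton]
  have hkey : I.card ≤ L * (m + 1) := by
    calc I.card ≤ L * (I.image (fun p => p + cI I p)).card :=
          Finset.card_le_mul_card_image I L hfiber
      _ ≤ L * (m + 1) := Nat.mul_le_mul_left L himgcard
  have hta : I.card ≤ a := card_le_sup hIpos
  calc a < I.card + m + 1 := by omega
    _ ≤ L * (m + 1) + (m + 1) := by omega
    _ = (L + 1) * (m + 1) := by ring
    _ ≤ n * (m + 1) := Nat.mul_le_mul_right (m + 1) hn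

end Witness

end Stmt3Aux

/-- if `α_t - t ≥ 1` and `n ≥ L + 1`, then
`𝔡^{α_t - t}(I,n) < 𝔡^{α_t - t + 1}(I,n)`. -/
theorem stmt_3 (I : Finset ℕ) (hI : I.Nonempty) (hIpos : ∀ x ∈ I, 1 ≤ x)
    (hgap : 1 ≤ I.sup id - I.card) (n : ℕ) (hn : longestRun I + 1 ≤ n) :
    dP (I.sup id - I.card) I n < dP (I.sup id - I.card + 1) I n := by
  classical
  have h1 : dP (I.sup id - I.card) I n ≤ (Stmt3Aux.Bset (I.sup id - I.card) I n).ncard :=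
    Stmt3Aux.dP_le_B hI hIpos
  have hanm : I.sup id < n * (I.sup id - I.card + 1) := Stmt3Aux.sup_lt_mul hIpos hn
  have h2 : dP (I.sup id - I.card + 1) I n
      = (Stmt3Aux.Bset (I.sup id - I.card + 1) I n).ncard :=
    Stmt3Aux.dP_eq_B hI hIpos (by omega) hanm
  have h3 : Stmt3Aux.Bset (I.sup id - I.card) I n
      ⊂ Stmt3Aux.Bset (I.sup id - I.card + 1) I n := by
    refine ⟨Stmt3Aux.Bset_mono hgap, fun hsub => ?_⟩
    exact Stmt3Aux.wit_not_in_Bset hI hIpos hn hgap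
      (hsub (Stmt3Aux.wit_in_Bset hI hIpos hn hgap))
  have h4 := Set.ncard_lt_ncard h3 (Stmt3Aux.Bset_finite _ _ _)
  omega
end

section
/- For all positive integers n and m, D^m(I,n) = Σ_{A ∈ Comp(α_t, m)} C(A,I) · C(n, r(A)), where Comp(α_t, m) is the set of compositions of α_t all of whose parts are at most m, r(A) is the length of the composition A, C(n, r) is the binomial coefficient, and for A = (a_1,…,a_r), C(A,I) is the number of sequences v = (v_1,…,v_{α_t}) with entries in {1,…,r} such that Des(v) = I \ {α_t} and, for each j ∈ {1,…,r}, the number j appears exactly a_j times in v. -/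
open Finset

set_option linter.unreachableTactic false
set_option linter.unusedTactic false
set_option linter.unusedVariables false

section Helpers

attribute [local instance low] Classical.propDecidable

namespace Stmt4Aux

open Finset

/-- rank of `x` in `S`, 1-indexed. -/
def rk (S : Finset ℕ) (x : ℕ) : ℕ := (S.filter (· ≤ x)).card

/-- the `j`-th smallest element of `S`, 1-indexed. -/
def unrk (S : Finset ℕ) (j : ℕ) : ℕ := (S.sort (· ≤ ·)).getD (j - 1) 0

lemma rk_mem {S : Finset ℕ} {x : ℕ} (hx : x ∈ S) : rk S x ∈ Finset.Icc 1 S.card := by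
  rw [Finset.mem_Icc]
  constructor
  · have : x ∈ S.filter (· ≤ x) := Finset.mem_filter.2 ⟨hx, le_refl x⟩
    exact Finset.card_pos.2 ⟨x, this⟩
  · exact Finset.card_le_card (Finset.filter_subset _ _)

lemma rk_mono (S : Finset ℕ) {x y : ℕ} (h : x ≤ y) : rk S x ≤ rk S y := by
  apply Finset.card_le_card
  intro z hz
  rw [Finset.mem_filter] at *
  exact ⟨hz.1, le_trans hz.2 h⟩

lemma rk_lt_rk {S : Finset ℕ} {x y : ℕ} (hy : y ∈ S) (h : x < y) : rk S x < rk S y := by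
  apply Finset.card_lt_card
  constructor
  · intro z hz
    rw [Finset.mem_filter] at *
    exact ⟨hz.1, le_trans hz.2 h.le⟩
  · intro hsub
    have := Finset.mem_filter.1 (hsub (Finset.mem_filter.2 ⟨hy, le_refl y⟩))
    omega

lemma rk_lt_iff {S : Finset ℕ} {x y : ℕ} (hy : y ∈ S) : rk S x < rk S y ↔ x < y := by
  constructor
  · intro h
    by_contra hxy
    exact absurd (rk_mono S (not_lt.1 hxy)) (not_le.2 h)
  · exact rk_lt_rk hy

lemma rk_injOn {S : Finset ℕ} {x y : ℕ} (hx : x ∈ S) (hy : y ∈ S) (h : rk S x = rk S y) :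
    x = y := by
  rcases lt_trichotomy x y with h1 | h1 | h1
  · exact absurd h (ne_of_lt (rk_lt_rk hy h1))
  · exact h1
  · exact absurd h.symm (ne_of_lt (rk_lt_rk hx h1))

lemma unrk_mem {S : Finset ℕ} {j : ℕ} (h1 : 1 ≤ j) (h2 : j ≤ S.card) : unrk S j ∈ S := by
  have hlen : (S.sort (· ≤ ·)).length = S.card := S.length_sort _
  have hj : j - 1 < (S.sort (· ≤ ·)).length := by omega
  rw [unrk, List.getD_eq_getElem _ _ hj]
  exact (Finset.mem_sort _).1 (List.getElem_mem hj)

lemma rk_unrk {S : Finset ℕ} {j : ℕ} (h1 : 1 ≤ j) (h2 : j ≤ S.card) : rk S (unrk S j) = j := by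
  classical
  set L := S.sort (· ≤ ·) with hL
  have hlen : L.length = S.card := S.length_sort _
  have hj : j - 1 < L.length := by omega
  have hsl : L.SortedLT := S.sortedLT_sort
  have hmono : StrictMono L.get := hsl.strictMono_get
  have hx : unrk S j = L.get ⟨j - 1, hj⟩ := by
    rw [unrk, List.getD_eq_getElem _ _ hj]; rfl
  have hset : S.filter (· ≤ unrk S j) =
      Finset.image (fun i : Fin L.length => L.get i) (Finset.Iic ⟨j - 1, hj⟩) := by
    ext y
    simp only [Finset.mem_filter, Finset.mem_image, Finset.mem_Iic]
    constructor
    · rintro ⟨hyS, hyle⟩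
      have hyL : y ∈ L := (Finset.mem_sort _).2 hyS
      obtain ⟨i, hi⟩ := List.get_of_mem hyL
      refine ⟨i, ?_, hi⟩
      rw [← hi, hx] at hyle
      exact hmono.le_iff_le.1 hyle
    · rintro ⟨i, hile, rfl⟩
      refine ⟨(Finset.mem_sort _).1 (L.get_mem _), ?_⟩
      rw [hx]
      exact hmono.monotone hile
  have : rk S (unrk S j) = (Finset.Iic (⟨j - 1, hj⟩ : Fin L.length)).card := by
    rw [rk, hset, Finset.card_image_of_injective _ hmono.injective]
  rw [this, Fin.card_Iic]
  show j - 1 + 1 = j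
  omega

lemma unrk_rk {S : Finset ℕ} {x : ℕ} (hx : x ∈ S) : unrk S (rk S x) = x := by
  have h := rk_mem hx
  rw [Finset.mem_Icc] at h
  have h1 := unrk_mem h.1 h.2
  have h2 := rk_unrk (S := S) h.1 h.2
  exact rk_injOn h1 hx h2


/-- All sequences of length `ℓ` with entries in `{1,…,n}`, as a Finset. -/
noncomputable def seqFin (ℓ n : ℕ) : Finset (ℕ → ℕ) :=
  ((Finset.Icc 1 ℓ).pi fun _ => Finset.Icc 1 n).image fun g i =>
    if h : i ∈ Finset.Icc 1 ℓ then g i h else 0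

lemma mem_seqFin {ℓ n : ℕ} {v : ℕ → ℕ} : v ∈ seqFin ℓ n ↔ v ∈ Seqs ℓ n := by
  constructor
  · intro hv
    rw [seqFin, Finset.mem_image] at hv
    obtain ⟨g, hg, rfl⟩ := hv
    rw [Finset.mem_pi] at hg
    constructor
    · intro i hi
      simp only [hi, dif_pos]
      exact hg i hi
    · intro i hi
      simp only [hi, dif_neg, not_false_iff]
  · rintro ⟨h1, h2⟩
    rw [seqFin, Finset.mem_image]
    refine ⟨fun i _ => v i, ?_, ?_⟩
    · rw [Finset.mem_pi]; exact fun i hi => h1 i hi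
    · funext i
      by_cases hi : i ∈ Finset.Icc 1 ℓ
      · simp [hi]
      · simp [hi, h2 i hi]

lemma coe_seqFin (ℓ n : ℕ) : (↑(seqFin ℓ n) : Set (ℕ → ℕ)) = Seqs ℓ n := by
  ext v; exact mem_seqFin

/-- set of values used by `v`. -/
def vals (ℓ : ℕ) (v : ℕ → ℕ) : Finset ℕ := (Finset.Icc 1 ℓ).image v

/-- standardization of `v` relative to value set `S`. -/
def stdMap (ℓ : ℕ) (S : Finset ℕ) (v : ℕ → ℕ) : ℕ → ℕ :=
  fun i => if i ∈ Finset.Icc 1 ℓ then rk S (v i) else 0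

/-- inverse of standardization relative to value set `S`. -/
def unstdMap (ℓ : ℕ) (S : Finset ℕ) (w : ℕ → ℕ) : ℕ → ℕ :=
  fun i => if i ∈ Finset.Icc 1 ℓ then unrk S (w i) else 0

lemma mem_vals {ℓ : ℕ} {v : ℕ → ℕ} {i : ℕ} (hi : i ∈ Finset.Icc 1 ℓ) :
    v i ∈ vals ℓ v := Finset.mem_image_of_mem v hi

lemma Des_stdMap {ℓ : ℕ} {S : Finset ℕ} {v : ℕ → ℕ}
    (hv : ∀ i ∈ Finset.Icc 1 ℓ, v i ∈ S) : Des ℓ (stdMap ℓ S v) = Des ℓ v := by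
  ext i
  simp only [Des, Set.mem_setOf_eq]
  constructor
  · rintro ⟨h1, h2, h3⟩
    refine ⟨h1, h2, ?_⟩
    have hi : i ∈ Finset.Icc 1 ℓ := Finset.mem_Icc.2 ⟨h1, h2.le⟩
    have hi1 : i + 1 ∈ Finset.Icc 1 ℓ := Finset.mem_Icc.2 ⟨by omega, by omega⟩
    simp only [stdMap, hi, hi1, if_pos] at h3
    exact (rk_lt_iff (hv i hi)).1 h3
  · rintro ⟨h1, h2, h3⟩
    refine ⟨h1, h2, ?_⟩
    have hi : i ∈ Finset.Icc 1 ℓ := Finset.mem_Icc.2 ⟨h1, h2.le⟩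
    have hi1 : i + 1 ∈ Finset.Icc 1 ℓ := Finset.mem_Icc.2 ⟨by omega, by omega⟩
    simp only [stdMap, hi, hi1, if_pos]
    exact (rk_lt_iff (hv i hi)).2 h3

lemma Des_unstdMap {ℓ : ℕ} {S : Finset ℕ} {w : ℕ → ℕ}
    (hw : ∀ i ∈ Finset.Icc 1 ℓ, w i ∈ Finset.Icc 1 S.card) :
    Des ℓ (unstdMap ℓ S w) = Des ℓ w := by
  ext i
  simp only [Des, Set.mem_setOf_eq]
  have key : ∀ (h1 : 1 ≤ i) (h2 : i < ℓ),
      (unstdMap ℓ S w (i + 1) < unstdMap ℓ S w i ↔ w (i + 1) < w i) := by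
    intro h1 h2
    have hi : i ∈ Finset.Icc 1 ℓ := Finset.mem_Icc.2 ⟨h1, h2.le⟩
    have hi1 : i + 1 ∈ Finset.Icc 1 ℓ := Finset.mem_Icc.2 ⟨by omega, by omega⟩
    have ha := Finset.mem_Icc.1 (hw i hi)
    have hb := Finset.mem_Icc.1 (hw (i + 1) hi1)
    simp only [unstdMap, hi, hi1, if_pos]
    constructor
    · intro h
      have := (rk_lt_iff (unrk_mem ha.1 ha.2)).2 h
      rwa [rk_unrk hb.1 hb.2, rk_unrk ha.1 ha.2] at this
    · intro h
      have h' : rk S (unrk S (w (i + 1))) < rk S (unrk S (w i)) := by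
        rw [rk_unrk hb.1 hb.2, rk_unrk ha.1 ha.2]; exact h
      exact (rk_lt_iff (unrk_mem ha.1 ha.2)).1 h'
  constructor
  · rintro ⟨h1, h2, h3⟩
    exact ⟨h1, h2, (key h1 h2).1 h3⟩
  · rintro ⟨h1, h2, h3⟩
    exact ⟨h1, h2, (key h1 h2).2 h3⟩


lemma mult_stdMap {ℓ : ℕ} {S : Finset ℕ} {v : ℕ → ℕ}
    (hv : ∀ i ∈ Finset.Icc 1 ℓ, v i ∈ S) {j : ℕ} (h1 : 1 ≤ j) (h2 : j ≤ S.card) :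
    mult ℓ (stdMap ℓ S v) j = mult ℓ v (unrk S j) := by
  unfold mult
  congr 1
  apply Finset.filter_congr
  intro i hi
  simp only [stdMap, hi, if_pos]
  constructor
  · intro h
    rw [← h, unrk_rk (hv i hi)]
  · intro h
    rw [h, rk_unrk h1 h2]

lemma mult_unstdMap_mem {ℓ : ℕ} {S : Finset ℕ} {w : ℕ → ℕ}
    (hw : ∀ i ∈ Finset.Icc 1 ℓ, w i ∈ Finset.Icc 1 S.card) {x : ℕ} (hx : x ∈ S) :
    mult ℓ (unstdMap ℓ S w) x = mult ℓ w (rk S x) := by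
  unfold mult
  congr 1
  apply Finset.filter_congr
  intro i hi
  have hb := Finset.mem_Icc.1 (hw i hi)
  simp only [unstdMap, hi, if_pos]
  constructor
  · intro h
    rw [← h, rk_unrk hb.1 hb.2]
  · intro h
    rw [h, unrk_rk hx]

lemma mult_unstdMap_not_mem {ℓ : ℕ} {S : Finset ℕ} {w : ℕ → ℕ}
    (hw : ∀ i ∈ Finset.Icc 1 ℓ, w i ∈ Finset.Icc 1 S.card) {x : ℕ} (hx : x ∉ S) :
    mult ℓ (unstdMap ℓ S w) x = 0 := by
  unfold mult
  rw [Finset.card_eq_zero, Finset.filter_eq_empty_iff]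
  intro i hi
  have hb := Finset.mem_Icc.1 (hw i hi)
  simp only [unstdMap, hi, if_pos]
  intro h
  exact hx (h ▸ unrk_mem hb.1 hb.2)

/-- the list of multiplicities of the standardization of `v`. -/
noncomputable def blockList (ℓ : ℕ) (v : ℕ → ℕ) : List ℕ :=
  (List.range (vals ℓ v).card).map fun j => mult ℓ (stdMap ℓ (vals ℓ v) v) (j + 1)

lemma blockList_length (ℓ : ℕ) (v : ℕ → ℕ) :
    (blockList ℓ v).length = (vals ℓ v).card := by
  simp [blockList]

lemma blockList_getD {ℓ : ℕ} {v : ℕ → ℕ} {j : ℕ} (hj : j < (vals ℓ v).card) :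
    (blockList ℓ v).getD j 0 = mult ℓ (stdMap ℓ (vals ℓ v) v) (j + 1) := by
  have hlen : j < (blockList ℓ v).length := by rw [blockList_length]; exact hj
  rw [List.getD_eq_getElem _ _ hlen]
  simp [blockList]

lemma blockList_pos {ℓ : ℕ} {v : ℕ → ℕ} {a : ℕ} (ha : a ∈ blockList ℓ v) : 0 < a := by
  rw [blockList, List.mem_map] at ha
  obtain ⟨j, hj, rfl⟩ := ha
  rw [List.mem_range] at hj
  have h1 : 1 ≤ j + 1 := by omega
  have h2 : j + 1 ≤ (vals ℓ v).card := by omega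
  rw [mult_stdMap (fun i hi => mem_vals hi) h1 h2]
  have hu : unrk (vals ℓ v) (j + 1) ∈ vals ℓ v := unrk_mem h1 h2
  rw [vals, Finset.mem_image] at hu
  obtain ⟨i, hi, hvi⟩ := hu
  rw [mult]
  refine Finset.card_pos.2 ⟨i, Finset.mem_filter.2 ⟨hi, hvi⟩⟩

lemma sum_list_range_map (f : ℕ → ℕ) (r : ℕ) :
    ((List.range r).map f).sum = ∑ j ∈ Finset.range r, f j := by
  induction r with
  | zero => simp
  | succ r ih => rw [List.range_succ, List.map_append, List.sum_append,
      Finset.sum_range_succ, ih]; simp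

lemma blockList_sum (ℓ : ℕ) (v : ℕ → ℕ) : (blockList ℓ v).sum = ℓ := by
  rw [blockList, sum_list_range_map]
  have hfib : (Finset.Icc 1 ℓ).card =
      ∑ j ∈ Finset.Icc 1 (vals ℓ v).card,
        ((Finset.Icc 1 ℓ).filter fun i => stdMap ℓ (vals ℓ v) v i = j).card := by
    apply Finset.card_eq_sum_card_fiberwise
    intro i hi
    rw [Finset.mem_coe] at hi ⊢
    simp only [stdMap, hi, if_pos]
    exact rk_mem (mem_vals hi)
  have hIcc : (Finset.Icc 1 ℓ).card = ℓ := by rw [Nat.card_Icc]; omega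
  have : ∑ j ∈ Finset.range (vals ℓ v).card, mult ℓ (stdMap ℓ (vals ℓ v) v) (j + 1)
      = ∑ j ∈ Finset.Icc 1 (vals ℓ v).card, mult ℓ (stdMap ℓ (vals ℓ v) v) j := by
    apply Finset.sum_nbij' (i := fun j => j + 1) (j := fun j => j - 1)
    all_goals intro a ha
    all_goals simp only [Finset.mem_range, Finset.mem_Icc] at ha ⊢
    all_goals first
      | rfl
      | omega
      | (congr 1; omega)
  rw [this]
  unfold mult
  omega

/-- the composition of `ℓ` associated with `v`. -/
noncomputable def compOf (ℓ : ℕ) (v : ℕ → ℕ) : Composition ℓ :=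
  ⟨blockList ℓ v, fun ha => blockList_pos ha, blockList_sum ℓ v⟩

lemma vals_subset {ℓ n : ℕ} {v : ℕ → ℕ} (hv : v ∈ Seqs ℓ n) :
    vals ℓ v ⊆ Finset.Icc 1 n := by
  intro x hx
  rw [vals, Finset.mem_image] at hx
  obtain ⟨i, hi, rfl⟩ := hx
  exact hv.1 i hi

lemma unstd_std {ℓ : ℕ} {S : Finset ℕ} {v : ℕ → ℕ}
    (hv : ∀ i ∈ Finset.Icc 1 ℓ, v i ∈ S) (hv0 : ∀ i ∉ Finset.Icc 1 ℓ, v i = 0) :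
    unstdMap ℓ S (stdMap ℓ S v) = v := by
  funext i
  by_cases hi : i ∈ Finset.Icc 1 ℓ
  · simp only [unstdMap, stdMap, hi, if_pos]
    exact unrk_rk (hv i hi)
  · simp only [unstdMap, hi, if_neg, not_false_iff]
    exact (hv0 i hi).symm

lemma std_unstd {ℓ : ℕ} {S : Finset ℕ} {w : ℕ → ℕ}
    (hw : ∀ i ∈ Finset.Icc 1 ℓ, w i ∈ Finset.Icc 1 S.card)
    (hw0 : ∀ i ∉ Finset.Icc 1 ℓ, w i = 0) :
    stdMap ℓ S (unstdMap ℓ S w) = w := by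
  funext i
  by_cases hi : i ∈ Finset.Icc 1 ℓ
  · simp only [unstdMap, stdMap, hi, if_pos]
    have hb := Finset.mem_Icc.1 (hw i hi)
    exact rk_unrk hb.1 hb.2
  · simp only [stdMap, hi, if_neg, not_false_iff]
    exact (hw0 i hi).symm

/-- classical filter with explicit decidability instance. -/
noncomputable def fil {α : Type*} (p : α → Prop) (s : Finset α) : Finset α :=
  @Finset.filter α p (Classical.decPred p) s

lemma mem_fil {α : Type*} {p : α → Prop} {s : Finset α} {a : α} :
    a ∈ fil p s ↔ a ∈ s ∧ p a := by
  unfold fil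
  exact Finset.mem_filter

lemma key (ℓ n m : ℕ) (J : Set ℕ) :
    (fil (fun v =>
        Des ℓ v = J ∧ ∀ j ∈ Finset.Icc 1 n, mult ℓ v j ≤ m) (seqFin ℓ n)).card =
      ∑ A ∈ Finset.univ.filter (fun A : Composition ℓ => ∀ a ∈ A.blocks, a ≤ m),
        (fil (fun w =>
            Des ℓ w = J ∧
              ∀ j ∈ Finset.Icc 1 A.length, mult ℓ w j = A.blocks.getD (j - 1) 0)
            (seqFin ℓ A.length)).card *
          n.choose A.length := by
  set Dfin := fil (fun v =>
      Des ℓ v = J ∧ ∀ j ∈ Finset.Icc 1 n, mult ℓ v j ≤ m) (seqFin ℓ n) with hDfin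
  -- step 1 : fiber by the associated composition
  have h1 : ∀ v ∈ Dfin, compOf ℓ v ∈
      Finset.univ.filter (fun A : Composition ℓ => ∀ a ∈ A.blocks, a ≤ m) := by
    intro v hv
    obtain ⟨hvseq, _, hmult⟩ := mem_fil.1 hv
    refine Finset.mem_filter.2 ⟨Finset.mem_univ _, ?_⟩
    intro a ha
    have : a ∈ blockList ℓ v := ha
    rw [blockList, List.mem_map] at this
    obtain ⟨j, hj, rfl⟩ := this
    rw [List.mem_range] at hj
    have hj1 : 1 ≤ j + 1 := by omega
    have hj2 : j + 1 ≤ (vals ℓ v).card := by omega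
    rw [mult_stdMap (fun i hi => mem_vals hi) hj1 hj2]
    have hu : unrk (vals ℓ v) (j + 1) ∈ Finset.Icc 1 n :=
      vals_subset (mem_seqFin.1 hvseq) (unrk_mem hj1 hj2)
    exact hmult _ hu
  rw [Finset.card_eq_sum_card_fiberwise h1]
  apply Finset.sum_congr rfl
  intro A hA
  have hAm : ∀ a ∈ A.blocks, a ≤ m := (Finset.mem_filter.1 hA).2
  -- step 2 : fiber by the value set
  have h2 : ∀ v ∈ Dfin.filter (fun v => compOf ℓ v = A),
      vals ℓ v ∈ (Finset.Icc 1 n).powersetCard A.length := by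
    intro v hv
    obtain ⟨hvD, hcomp⟩ := Finset.mem_filter.1 hv
    obtain ⟨hvseq2, -⟩ := mem_fil.1 hvD
    rw [Finset.mem_powersetCard]
    refine ⟨vals_subset (mem_seqFin.1 hvseq2), ?_⟩
    have : (blockList ℓ v).length = A.blocks.length := by rw [← hcomp]; rfl
    rw [blockList_length] at this
    rw [this, Composition.blocks_length]
  rw [Finset.card_eq_sum_card_fiberwise h2]
  -- step 3 : each fiber is in bijection with the `Ccount` set
  have h3 : ∀ S ∈ (Finset.Icc 1 n).powersetCard A.length,
      ((Dfin.filter (fun v => compOf ℓ v = A)).filter (fun v => vals ℓ v = S)).card =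
      (fil (fun w =>
          Des ℓ w = J ∧
            ∀ j ∈ Finset.Icc 1 A.length, mult ℓ w j = A.blocks.getD (j - 1) 0)
          (seqFin ℓ A.length)).card := by
    intro S hSmem
    rw [Finset.mem_powersetCard] at hSmem
    obtain ⟨hS, hScard⟩ := hSmem
    apply Finset.card_nbij' (i := stdMap ℓ S) (j := unstdMap ℓ S)
    · -- forward maps into target
      intro v hv
      obtain ⟨hv2, hvals⟩ := Finset.mem_filter.1 hv
      obtain ⟨hv3, hcomp⟩ := Finset.mem_filter.1 hv2
      obtain ⟨hvseq, hDes, hmult⟩ := mem_fil.1 hv3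
      have hv' := mem_seqFin.1 hvseq
      have hvS : ∀ i ∈ Finset.Icc 1 ℓ, v i ∈ S := fun i hi => hvals ▸ mem_vals hi
      refine mem_fil.2 ⟨?_, ?_, ?_⟩
      · rw [mem_seqFin]
        constructor
        · intro i hi
          simp only [stdMap, hi, if_pos]
          have := rk_mem (hvS i hi)
          rwa [hScard] at this
        · intro i hi
          simp only [stdMap, hi, if_neg, not_false_iff]
      · rw [Des_stdMap hvS, hDes]
      · intro j hj
        rw [Finset.mem_Icc] at hj
        have hjv : j - 1 < (vals ℓ v).card := by
          rw [hvals, hScard]; omega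
        have := blockList_getD hjv
        rw [hvals] at this
        have hj1 : j - 1 + 1 = j := by omega
        rw [hj1] at this
        rw [← this, ← hcomp]
        rfl
    · -- backward maps into source
      intro w hw
      obtain ⟨hwseq, hwDes, hwmult⟩ := mem_fil.1 hw
      have hw' := mem_seqFin.1 hwseq
      have hwS : ∀ i ∈ Finset.Icc 1 ℓ, w i ∈ Finset.Icc 1 S.card := by
        intro i hi; rw [hScard]; exact hw'.1 i hi
      have hlenA : A.blocks.length = A.length := Composition.blocks_length A
      -- values of unstdMap are in S
      have hvS : ∀ i ∈ Finset.Icc 1 ℓ, unstdMap ℓ S w i ∈ S := by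
        intro i hi
        have hb := Finset.mem_Icc.1 (hwS i hi)
        simp only [unstdMap, hi, if_pos]
        exact unrk_mem hb.1 hb.2
      have hvals : vals ℓ (unstdMap ℓ S w) = S := by
        apply Finset.Subset.antisymm
        · intro x hx
          rw [vals, Finset.mem_image] at hx
          obtain ⟨i, hi, rfl⟩ := hx
          exact hvS i hi
        · intro x hx
          have hrk := Finset.mem_Icc.1 (rk_mem hx)
          have hpos : 0 < mult ℓ w (rk S x) := by
            have h1 : rk S x ∈ Finset.Icc 1 A.length := by
              rw [Finset.mem_Icc]; rw [hScard] at hrk; exact hrk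
            rw [hwmult _ h1]
            have hlt : rk S x - 1 < A.blocks.length := by
              rw [hlenA]; rw [Finset.mem_Icc] at h1; omega
            rw [List.getD_eq_getElem _ _ hlt]
            exact A.blocks_pos (List.getElem_mem hlt)
          rw [mult] at hpos
          obtain ⟨i, hi⟩ := Finset.card_pos.1 hpos
          rw [Finset.mem_filter] at hi
          rw [vals, Finset.mem_image]
          refine ⟨i, hi.1, ?_⟩
          simp only [unstdMap, hi.1, if_pos, hi.2]
          exact unrk_rk hx
      have hstd : stdMap ℓ S (unstdMap ℓ S w) = w := std_unstd hwS hw'.2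
      refine Finset.mem_filter.2 ⟨Finset.mem_filter.2 ⟨mem_fil.2 ⟨?_, ?_, ?_⟩, ?_⟩, hvals⟩
      · rw [mem_seqFin]
        constructor
        · intro i hi
          exact hS (hvS i hi)
        · intro i hi
          simp only [unstdMap, hi, if_neg, not_false_iff]
      · rw [Des_unstdMap hwS, hwDes]
      · intro x hx
        by_cases hxS : x ∈ S
        · rw [mult_unstdMap_mem hwS hxS]
          have hrk := Finset.mem_Icc.1 (rk_mem hxS)
          have h1 : rk S x ∈ Finset.Icc 1 A.length := by
            rw [Finset.mem_Icc]; rw [hScard] at hrk; exact hrk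
          rw [hwmult _ h1]
          have hlt : rk S x - 1 < A.blocks.length := by
            rw [hlenA]; rw [Finset.mem_Icc] at h1; omega
          rw [List.getD_eq_getElem _ _ hlt]
          exact hAm _ (List.getElem_mem hlt)
        · rw [mult_unstdMap_not_mem hwS hxS]
          omega
      · -- compOf (unstdMap w) = A
        apply Composition.ext
        apply List.ext_getElem
        · show (blockList ℓ (unstdMap ℓ S w)).length = A.blocks.length
          rw [blockList_length, hvals, hScard, hlenA]
        · intro i hi1 hi2
          have hi1' : i < (blockList ℓ (unstdMap ℓ S w)).length := hi1
          have hiv : i < (vals ℓ (unstdMap ℓ S w)).card := by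
            rw [blockList_length] at hi1'; exact hi1'
          have h := blockList_getD hiv
          have hgd : (blockList ℓ (unstdMap ℓ S w)).getD i 0 =
              (blockList ℓ (unstdMap ℓ S w))[i]'hi1' :=
            List.getD_eq_getElem _ _ hi1'
          show (blockList ℓ (unstdMap ℓ S w))[i]'hi1' = A.blocks[i]'hi2
          rw [← hgd, h, hvals, hstd]
          have hmem : i + 1 ∈ Finset.Icc 1 A.length := by
            rw [Finset.mem_Icc]; rw [hlenA] at hi2; omega
          rw [hwmult _ hmem]
          simp only [Nat.add_sub_cancel]
          exact List.getD_eq_getElem _ _ hi2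
    · -- left inverse
      intro v hv
      obtain ⟨hv2, hvals⟩ := Finset.mem_filter.1 hv
      obtain ⟨hv3, -⟩ := Finset.mem_filter.1 hv2
      obtain ⟨hvseq, -, -⟩ := mem_fil.1 hv3
      have hv' := mem_seqFin.1 hvseq
      exact unstd_std (fun i hi => hvals ▸ mem_vals hi) hv'.2
    · -- right inverse
      intro w hw
      have hw' := mem_seqFin.1 (mem_fil.1 hw).1
      exact std_unstd (fun i hi => by rw [hScard]; exact hw'.1 i hi) hw'.2
  rw [Finset.sum_congr rfl h3, Finset.sum_const, Finset.card_powersetCard,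
    Nat.card_Icc, smul_eq_mul, Nat.add_sub_cancel, mul_comm]

lemma Dcount_eq (m : ℕ) (I : Finset ℕ) (n : ℕ) :
    Dcount m I n =
      (fil (fun v => Des (I.sup id) v = ↑(I.erase (I.sup id)) ∧
          ∀ j ∈ Finset.Icc 1 n, mult (I.sup id) v j ≤ m)
        (seqFin (I.sup id) n)).card := by
  rw [Dcount, ← Set.ncard_coe_finset]
  congr 1
  ext v
  simp only [Set.mem_setOf_eq, Finset.mem_coe, mem_fil, mem_seqFin]

lemma Ccount_eq (I : Finset ℕ) (A : Composition (I.sup id)) :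
    Ccount I A =
      (fil (fun w => Des (I.sup id) w = ↑(I.erase (I.sup id)) ∧
          ∀ j ∈ Finset.Icc 1 A.length, mult (I.sup id) w j = A.blocks.getD (j - 1) 0)
        (seqFin (I.sup id) A.length)).card := by
  rw [Ccount, ← Set.ncard_coe_finset]
  congr 1
  ext v
  simp only [Set.mem_setOf_eq, Finset.mem_coe, mem_fil, mem_seqFin]

end Stmt4Aux

end Helpers

/-- `D^m(I,n) = Σ_{A ∈ Comp(α_t, m)} C(A,I) · C(n, r(A))`, summing over
compositions of `α_t` all of whose parts are at most `m`. -/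
theorem stmt_4 (I : Finset ℕ) (hI : I.Nonempty) (hIpos : ∀ x ∈ I, 1 ≤ x)
    (n m : ℕ) (hn : 1 ≤ n) (hm : 1 ≤ m) :
    Dcount m I n =
      ∑ A ∈ Finset.univ.filter (fun A : Composition (I.sup id) => ∀ a ∈ A.blocks, a ≤ m),
        Ccount I A * n.choose A.length := by
  classical
  rw [Stmt4Aux.Dcount_eq, Stmt4Aux.key]
  apply Finset.sum_congr rfl
  intro A hA
  congr 1
  exact (Stmt4Aux.Ccount_eq I A).symm
end

section
/- For every positive integer m, there exists a polynomial p with rational coefficients such that D^m(I,n) = p(n) for every integer n ≥ α_t. -/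
open Finset

section Stmt5Aux

attribute [local instance 10] Classical.propDecidable

/-- Finset version of `Seqs`. -/
noncomputable def Fseqs (ℓ n : ℕ) : Finset (ℕ → ℕ) :=
  ((Finset.Icc 1 ℓ).pi fun _ => Finset.Icc 1 n).image
    fun f i => if h : i ∈ Finset.Icc 1 ℓ then f i h else 0

lemma mem_Fseqs {ℓ n : ℕ} {v : ℕ → ℕ} : v ∈ Fseqs ℓ n ↔ v ∈ Seqs ℓ n := by
  constructor
  · intro h
    obtain ⟨f, hf, rfl⟩ := Finset.mem_image.1 h
    constructor
    · intro i hi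
      simp only [hi, dif_pos]
      exact Finset.mem_pi.1 hf i hi
    · intro i hi
      simp [hi]
  · rintro ⟨h1, h2⟩
    refine Finset.mem_image.2 ⟨fun i _ => v i, ?_, ?_⟩
    · exact Finset.mem_pi.2 fun i hi => h1 i hi
    · funext i
      by_cases hi : i ∈ Finset.Icc 1 ℓ
      · simp [hi]
      · simp [hi, h2 i hi]

/-- Finset version of the set counted by `Dcount`, parametric in the length and descent set. -/
noncomputable def Dfin (ℓ : ℕ) (J : Finset ℕ) (m n : ℕ) : Finset (ℕ → ℕ) :=
  (Fseqs ℓ n).filter fun v =>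
    Des ℓ v = ↑J ∧ ∀ j ∈ Finset.Icc 1 n, mult ℓ v j ≤ m

/-- Sequences with entries in `{1,…,k}`, each value used at least once and at most `m` times,
with descent set `J`. -/
noncomputable def Tfin (ℓ : ℕ) (J : Finset ℕ) (m k : ℕ) : Finset (ℕ → ℕ) :=
  (Fseqs ℓ k).filter fun v =>
    Des ℓ v = ↑J ∧ (∀ j ∈ Finset.Icc 1 k, mult ℓ v j ≤ m) ∧
      ∀ j ∈ Finset.Icc 1 k, 1 ≤ mult ℓ v j

/-- The set of values used by `v`. -/
noncomputable def valueSet (ℓ n : ℕ) (v : ℕ → ℕ) : Finset ℕ :=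
  (Finset.Icc 1 n).filter fun j => ∃ i ∈ Finset.Icc 1 ℓ, v i = j

lemma mem_Dfin {ℓ : ℕ} {J : Finset ℕ} {m n : ℕ} {v : ℕ → ℕ} :
    v ∈ Dfin ℓ J m n ↔ v ∈ Seqs ℓ n ∧
      (Des ℓ v = ↑J ∧ ∀ j ∈ Finset.Icc 1 n, mult ℓ v j ≤ m) := by
  simp only [Dfin, Finset.mem_filter, mem_Fseqs]

lemma mem_Tfin {ℓ : ℕ} {J : Finset ℕ} {m k : ℕ} {v : ℕ → ℕ} :
    v ∈ Tfin ℓ J m k ↔ v ∈ Seqs ℓ k ∧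
      (Des ℓ v = ↑J ∧ (∀ j ∈ Finset.Icc 1 k, mult ℓ v j ≤ m) ∧
        ∀ j ∈ Finset.Icc 1 k, 1 ≤ mult ℓ v j) := by
  simp only [Tfin, Finset.mem_filter, mem_Fseqs]

lemma mem_valueSet {ℓ n : ℕ} {v : ℕ → ℕ} {j : ℕ} :
    j ∈ valueSet ℓ n v ↔ j ∈ Finset.Icc 1 n ∧ ∃ i ∈ Finset.Icc 1 ℓ, v i = j := by
  simp only [valueSet, Finset.mem_filter]

lemma one_le_mult_iff {ℓ : ℕ} {v : ℕ → ℕ} {j : ℕ} :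
    1 ≤ mult ℓ v j ↔ ∃ i ∈ Finset.Icc 1 ℓ, v i = j := by
  unfold mult
  constructor
  · intro h
    obtain ⟨i, hi⟩ := Finset.card_pos.1 h
    obtain ⟨h1, h2⟩ := Finset.mem_filter.1 hi
    exact ⟨i, h1, h2⟩
  · rintro ⟨i, h1, h2⟩
    exact Finset.card_pos.2 ⟨i, Finset.mem_filter.2 ⟨h1, h2⟩⟩

/-- Rank (1-indexed) of `j` inside `S`. -/
noncomputable def rk (S : Finset ℕ) (j : ℕ) : ℕ :=
  if h : j ∈ S then ((S.orderIsoOfFin rfl).symm ⟨j, h⟩ : Fin S.card) + 1 else 0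

/-- The `j`-th smallest element of `S` (1-indexed). -/
noncomputable def ev (S : Finset ℕ) (j : ℕ) : ℕ :=
  if h : j - 1 < S.card then ((S.orderIsoOfFin rfl) ⟨j - 1, h⟩ : ℕ) else 0

lemma rk_mem {S : Finset ℕ} {j : ℕ} (h : j ∈ S) : rk S j ∈ Finset.Icc 1 S.card := by
  simp only [rk, dif_pos h, Finset.mem_Icc]
  exact ⟨Nat.succ_le_succ (Nat.zero_le _), ((S.orderIsoOfFin rfl).symm ⟨j, h⟩).isLt⟩

lemma ev_rk {S : Finset ℕ} {j : ℕ} (h : j ∈ S) : ev S (rk S j) = j := by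
  set x := (S.orderIsoOfFin rfl).symm ⟨j, h⟩ with hx
  have h1 : rk S j = (x : ℕ) + 1 := by rw [rk, dif_pos h]
  have hlt : (x : ℕ) + 1 - 1 < S.card := by simpa using x.isLt
  rw [h1, ev, dif_pos hlt]
  have h2 : (⟨(x : ℕ) + 1 - 1, hlt⟩ : Fin S.card) = x := by
    apply Fin.ext; simp
  rw [h2, hx, OrderIso.apply_symm_apply]

lemma ev_mem {S : Finset ℕ} {j : ℕ} (h : j ∈ Finset.Icc 1 S.card) : ev S j ∈ S := by
  obtain ⟨h1, h2⟩ := Finset.mem_Icc.1 h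
  have hlt : j - 1 < S.card := by omega
  simp only [ev, dif_pos hlt]
  exact ((S.orderIsoOfFin rfl) ⟨j - 1, hlt⟩).2

lemma rk_ev {S : Finset ℕ} {j : ℕ} (h : j ∈ Finset.Icc 1 S.card) : rk S (ev S j) = j := by
  obtain ⟨h1, h2⟩ := Finset.mem_Icc.1 h
  have hlt : j - 1 < S.card := by omega
  have hmem : ev S j ∈ S := ev_mem h
  simp only [rk, dif_pos hmem]
  have hval : (⟨ev S j, hmem⟩ : {x // x ∈ S}) = (S.orderIsoOfFin rfl) ⟨j - 1, hlt⟩ := by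
    apply Subtype.ext
    simp [ev, dif_pos hlt]
  rw [hval, OrderIso.symm_apply_apply]
  show j - 1 + 1 = j
  omega

lemma rk_lt_rk {S : Finset ℕ} {a b : ℕ} (ha : a ∈ S) (hb : b ∈ S) :
    rk S a < rk S b ↔ a < b := by
  simp only [rk, dif_pos ha, dif_pos hb, Nat.add_lt_add_iff_right]
  rw [← Fin.lt_iff_val_lt_val, (S.orderIsoOfFin rfl).symm.lt_iff_lt]
  exact Iff.rfl

/-- Standardization of a sequence with values in `S`. -/
noncomputable def stdz (S : Finset ℕ) (ℓ : ℕ) (w : ℕ → ℕ) : ℕ → ℕ :=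
  fun i => if i ∈ Finset.Icc 1 ℓ then rk S (w i) else 0

/-- Inverse of standardization: lift a sequence with values in `{1,…,|S|}` to values in `S`. -/
noncomputable def liftz (S : Finset ℕ) (ℓ : ℕ) (v : ℕ → ℕ) : ℕ → ℕ :=
  fun i => if i ∈ Finset.Icc 1 ℓ then ev S (v i) else 0

lemma stdz_des {S : Finset ℕ} {ℓ : ℕ} {w : ℕ → ℕ}
    (hw1 : ∀ i ∈ Finset.Icc 1 ℓ, w i ∈ S) :
    Des ℓ (stdz S ℓ w) = Des ℓ w := by
  ext i
  simp only [Des, Set.mem_setOf_eq]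
  constructor
  · rintro ⟨h1, h2, h3⟩
    refine ⟨h1, h2, ?_⟩
    have hi : i ∈ Finset.Icc 1 ℓ := Finset.mem_Icc.2 ⟨h1, le_of_lt h2⟩
    have hi1 : i + 1 ∈ Finset.Icc 1 ℓ := Finset.mem_Icc.2 ⟨by omega, h2⟩
    simp only [stdz, if_pos hi, if_pos hi1] at h3
    exact (rk_lt_rk (hw1 _ hi1) (hw1 _ hi)).1 h3
  · rintro ⟨h1, h2, h3⟩
    refine ⟨h1, h2, ?_⟩
    have hi : i ∈ Finset.Icc 1 ℓ := Finset.mem_Icc.2 ⟨h1, le_of_lt h2⟩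
    have hi1 : i + 1 ∈ Finset.Icc 1 ℓ := Finset.mem_Icc.2 ⟨by omega, h2⟩
    simp only [stdz, if_pos hi, if_pos hi1]
    exact (rk_lt_rk (hw1 _ hi1) (hw1 _ hi)).2 h3

lemma stdz_mult {S : Finset ℕ} {ℓ : ℕ} {w : ℕ → ℕ}
    (hw1 : ∀ i ∈ Finset.Icc 1 ℓ, w i ∈ S) {j : ℕ} (hj : j ∈ Finset.Icc 1 S.card) :
    mult ℓ (stdz S ℓ w) j = mult ℓ w (ev S j) := by
  unfold mult
  congr 1
  apply Finset.filter_congr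
  intro i hi
  simp only [stdz, if_pos hi]
  constructor
  · intro h
    rw [← h, ev_rk (hw1 _ hi)]
  · intro h
    rw [h, rk_ev hj]

lemma stdz_memS {S : Finset ℕ} {ℓ : ℕ} {w : ℕ → ℕ}
    (hw1 : ∀ i ∈ Finset.Icc 1 ℓ, w i ∈ S) :
    stdz S ℓ w ∈ Seqs ℓ S.card := by
  constructor
  · intro i hi
    simp only [stdz, if_pos hi]
    exact rk_mem (hw1 _ hi)
  · intro i hi
    simp [stdz, hi]

lemma liftz_stdz {S : Finset ℕ} {ℓ : ℕ} {w : ℕ → ℕ}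
    (hw1 : ∀ i ∈ Finset.Icc 1 ℓ, w i ∈ S)
    (hw2 : ∀ i, i ∉ Finset.Icc 1 ℓ → w i = 0) :
    liftz S ℓ (stdz S ℓ w) = w := by
  funext i
  by_cases hi : i ∈ Finset.Icc 1 ℓ
  · simp only [liftz, stdz, if_pos hi]
    exact ev_rk (hw1 _ hi)
  · simp only [liftz, if_neg hi]
    exact (hw2 i hi).symm

lemma stdz_liftz {S : Finset ℕ} {ℓ : ℕ} {v : ℕ → ℕ}
    (hv1 : ∀ i ∈ Finset.Icc 1 ℓ, v i ∈ Finset.Icc 1 S.card)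
    (hv2 : ∀ i, i ∉ Finset.Icc 1 ℓ → v i = 0) :
    stdz S ℓ (liftz S ℓ v) = v := by
  funext i
  by_cases hi : i ∈ Finset.Icc 1 ℓ
  · simp only [stdz, liftz, if_pos hi]
    exact rk_ev (hv1 _ hi)
  · simp only [stdz, if_neg hi]
    exact (hv2 i hi).symm

lemma liftz_vals {S : Finset ℕ} {ℓ : ℕ} {v : ℕ → ℕ}
    (hv1 : ∀ i ∈ Finset.Icc 1 ℓ, v i ∈ Finset.Icc 1 S.card) :
    ∀ i ∈ Finset.Icc 1 ℓ, liftz S ℓ v i ∈ S := by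
  intro i hi
  simp only [liftz, if_pos hi]
  exact ev_mem (hv1 _ hi)

lemma fiber_card (ℓ : ℕ) (J : Finset ℕ) (m n : ℕ) {S : Finset ℕ}
    (hS : S ⊆ Finset.Icc 1 n) :
    ((Dfin ℓ J m n).filter fun v => valueSet ℓ n v = S).card = (Tfin ℓ J m S.card).card := by
  apply Finset.card_bij' (fun w _ => stdz S ℓ w) (fun v _ => liftz S ℓ v)
  · -- stdz maps into Tfin
    intro w hw
    simp only [Finset.mem_filter] at hw
    obtain ⟨hwD, hval⟩ := hw
    obtain ⟨⟨hw1', hw2⟩, hdes, hmle⟩ := mem_Dfin.1 hwD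
    have hw1 : ∀ i ∈ Finset.Icc 1 ℓ, w i ∈ S := by
      intro i hi
      rw [← hval]
      exact mem_valueSet.2 ⟨hw1' i hi, ⟨i, hi, rfl⟩⟩
    refine mem_Tfin.2 ⟨stdz_memS hw1, ?_, ?_, ?_⟩
    · rw [stdz_des hw1]; exact hdes
    · intro j hj
      rw [stdz_mult hw1 hj]
      exact hmle _ (hS (ev_mem hj))
    · intro j hj
      rw [stdz_mult hw1 hj]
      have hmem : ev S j ∈ valueSet ℓ n w := by rw [hval]; exact ev_mem hj
      exact one_le_mult_iff.2 (mem_valueSet.1 hmem).2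
  · -- liftz maps into the fiber
    intro v hv
    obtain ⟨⟨hv1, hv2⟩, hdes, hmle, hmge⟩ := mem_Tfin.1 hv
    set w := liftz S ℓ v with hwdef
    have hw1 : ∀ i ∈ Finset.Icc 1 ℓ, w i ∈ S := liftz_vals hv1
    have hw2 : ∀ i, i ∉ Finset.Icc 1 ℓ → w i = 0 := by
      intro i hi; simp [hwdef, liftz, hi]
    have hsw : stdz S ℓ w = v := stdz_liftz hv1 hv2
    simp only [Finset.mem_filter]
    constructor
    · refine mem_Dfin.2 ⟨⟨fun i hi => hS (hw1 i hi), hw2⟩, ?_, ?_⟩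
      · rw [← stdz_des hw1, hsw]; exact hdes
      · intro j hj
        by_cases hjS : j ∈ S
        · have h1 : mult ℓ w j = mult ℓ v (rk S j) := by
            conv_lhs => rw [← ev_rk hjS]
            rw [← stdz_mult hw1 (rk_mem hjS), hsw]
          rw [h1]
          exact hmle _ (rk_mem hjS)
        · have h0 : mult ℓ w j = 0 := by
            rw [mult, Finset.card_eq_zero, Finset.filter_eq_empty_iff]
            intro i hi hwi
            exact hjS (hwi ▸ hw1 i hi)
          omega
    · -- valueSet = S
      ext j
      rw [mem_valueSet]
      constructor
      · rintro ⟨-, i, hi, hwi⟩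
        exact hwi ▸ hw1 i hi
      · intro hjS
        refine ⟨hS hjS, ?_⟩
        obtain ⟨i, hiI, hvi⟩ := one_le_mult_iff.1 (hmge _ (rk_mem hjS))
        refine ⟨i, hiI, ?_⟩
        show liftz S ℓ v i = j
        rw [liftz, if_pos hiI, hvi, ev_rk hjS]
  · -- left inverse
    intro w hw
    simp only [Finset.mem_filter] at hw
    obtain ⟨hwD, hval⟩ := hw
    obtain ⟨⟨hw1', hw2⟩, -⟩ := mem_Dfin.1 hwD
    have hw1 : ∀ i ∈ Finset.Icc 1 ℓ, w i ∈ S := by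
      intro i hi
      rw [← hval]
      exact mem_valueSet.2 ⟨hw1' i hi, ⟨i, hi, rfl⟩⟩
    exact liftz_stdz hw1 hw2
  · -- right inverse
    intro v hv
    obtain ⟨⟨hv1, hv2⟩, -⟩ := mem_Tfin.1 hv
    exact stdz_liftz hv1 hv2

lemma Tfin_card_zero (ℓ : ℕ) (J : Finset ℕ) (m k : ℕ) (hk : ℓ < k) :
    (Tfin ℓ J m k).card = 0 := by
  rw [Finset.card_eq_zero, Finset.eq_empty_iff_forall_notMem]
  intro v hv
  obtain ⟨-, -, -, hmge⟩ := mem_Tfin.1 hv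
  have hwit : ∀ j ∈ Finset.Icc 1 k, ∃ i, i ∈ Finset.Icc 1 ℓ ∧ v i = j := by
    intro j hj
    obtain ⟨i, h1, h2⟩ := one_le_mult_iff.1 (hmge j hj)
    exact ⟨i, h1, h2⟩
  classical
  choose f hf1 hf2 using hwit
  have hcard : (Finset.Icc 1 k).card ≤ (Finset.Icc 1 ℓ).card := by
    apply Finset.card_le_card_of_injOn (fun j => if h : j ∈ Finset.Icc 1 k then f j h else 0)
    · intro j hj
      rw [Finset.mem_coe] at hj ⊢
      simp only [dif_pos hj]
      exact hf1 j hj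
    · intro a ha b hb hab
      rw [Finset.mem_coe] at ha hb
      simp only [dif_pos ha, dif_pos hb] at hab
      rw [← hf2 a ha, ← hf2 b hb, hab]
  simp only [Nat.card_Icc] at hcard
  omega

lemma Dfin_card_eq (ℓ : ℕ) (J : Finset ℕ) (m n : ℕ) :
    (Dfin ℓ J m n).card
      = ∑ k ∈ Finset.range (n + 1), n.choose k * (Tfin ℓ J m k).card := by
  have hmaps : ∀ v ∈ Dfin ℓ J m n, valueSet ℓ n v ∈ (Finset.Icc 1 n).powerset :=
    fun v _ => Finset.mem_powerset.2 (fun j hj => (mem_valueSet.1 hj).1)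
  rw [Finset.card_eq_sum_card_fiberwise hmaps]
  have step1 : ∑ S ∈ (Finset.Icc 1 n).powerset,
      ((Dfin ℓ J m n).filter fun v => valueSet ℓ n v = S).card
      = ∑ S ∈ (Finset.Icc 1 n).powerset, (Tfin ℓ J m S.card).card := by
    apply Finset.sum_congr rfl
    intro S hS
    exact fiber_card ℓ J m n (Finset.mem_powerset.1 hS)
  rw [step1, Finset.sum_powerset]
  simp only [Nat.card_Icc, Nat.add_sub_cancel]
  apply Finset.sum_congr rfl
  intro k hk
  have hconst : ∑ S ∈ Finset.powersetCard k (Finset.Icc 1 n), (Tfin ℓ J m S.card).card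
      = ∑ S ∈ Finset.powersetCard k (Finset.Icc 1 n), (Tfin ℓ J m k).card := by
    apply Finset.sum_congr rfl
    intro S hS
    rw [(Finset.mem_powersetCard.1 hS).2]
  rw [hconst, Finset.sum_const, smul_eq_mul, Finset.card_powersetCard, Nat.card_Icc,
    Nat.add_sub_cancel]

lemma choose_mul_factorial_eq (k : ℕ) :
    ∀ n : ℕ, (n.choose k : ℚ) * k.factorial = ∏ j ∈ Finset.range k, ((n : ℚ) - j) := by
  induction k with
  | zero => intro n; simp
  | succ k ih =>
    intro n
    rw [Finset.prod_range_succ, ← ih n]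
    by_cases h : k ≤ n
    · have key : n.choose (k + 1) * (k + 1) = n.choose k * (n - k) :=
        Nat.choose_succ_right_eq n k
      have hc : ((n : ℚ) - k) = ((n - k : ℕ) : ℚ) := by
        push_cast [h]; ring
      rw [Nat.factorial_succ]
      rw [hc]
      have hkey : ((n.choose (k + 1) : ℚ)) * ((k : ℚ) + 1)
          = (n.choose k : ℚ) * ((n - k : ℕ) : ℚ) := by
        exact_mod_cast congrArg (fun x : ℕ => (x : ℚ)) key
      push_cast at hkey ⊢
      nlinarith [hkey]
    · push_neg at h
      have h1 : n.choose (k + 1) = 0 := Nat.choose_eq_zero_of_lt (by omega)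
      have h2 : n.choose k = 0 := Nat.choose_eq_zero_of_lt h
      rw [h1, h2]
      simp

end Stmt5Aux

/-- for every positive integer `m`, there is a polynomial `p ∈ ℚ[x]` with
`D^m(I,n) = p(n)` for all integers `n ≥ α_t`. -/
theorem stmt_5 (I : Finset ℕ) (hI : I.Nonempty) (hIpos : ∀ x ∈ I, 1 ≤ x)
    (m : ℕ) (hm : 1 ≤ m) :
    ∃ p : Polynomial ℚ, ∀ n : ℕ, I.sup id ≤ n → (Dcount m I n : ℚ) = p.eval (n : ℚ) := by
  classical
  set ℓ := I.sup id with hℓdef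
  set J := I.erase ℓ with hJdef
  have hDcount : ∀ n : ℕ, Dcount m I n = (Dfin ℓ J m n).card := by
    intro n
    have hset : {w ∈ Seqs ℓ n |
        Des ℓ w = ↑J ∧ ∀ j ∈ Finset.Icc 1 n, mult ℓ w j ≤ m} = ↑(Dfin ℓ J m n) := by
      ext v
      simp only [Set.mem_setOf_eq, Set.mem_sep_iff, Finset.mem_coe, mem_Dfin]
    rw [Dcount, hset, Set.ncard_coe_finset]
  refine ⟨∑ k ∈ Finset.range (ℓ + 1),
      Polynomial.C (((Tfin ℓ J m k).card : ℚ) / k.factorial) *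
        ∏ j ∈ Finset.range k, (Polynomial.X - Polynomial.C (j : ℚ)), ?_⟩
  intro n hn
  rw [hDcount n, Dfin_card_eq]
  have htrunc : ∑ k ∈ Finset.range (n + 1), n.choose k * (Tfin ℓ J m k).card
      = ∑ k ∈ Finset.range (ℓ + 1), n.choose k * (Tfin ℓ J m k).card := by
    symm
    apply Finset.sum_subset (Finset.range_subset_range.2 (by omega))
    intro k hk hknot
    have hlk : ℓ < k := by
      simp only [Finset.mem_range] at hk hknot
      omega
    rw [Tfin_card_zero ℓ J m k hlk, mul_zero]
  rw [htrunc]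
  rw [Polynomial.eval_finset_sum]
  push_cast
  apply Finset.sum_congr rfl
  intro k hk
  have hch := choose_mul_factorial_eq k n
  have hfac : (k.factorial : ℚ) ≠ 0 := by
    exact_mod_cast k.factorial_ne_zero
  simp only [Polynomial.eval_mul, Polynomial.eval_C, Polynomial.eval_prod,
    Polynomial.eval_sub, Polynomial.eval_X]
  rw [← hch]
  field_simp
end
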